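/- arXiv:1011.3434 — 4 statements merged into one kernel-verified Lean document; each statement's English description precedes it below -/
import Mathlib

section
/- Let L > 2 be real, set Δ := 1/L and ε₁ := 24 exp(−L), and define Φ₊(x) := L ∫_{−1/2−√Δ}^{1/2+√Δ} Γ((x−μ)L) dμ + ε₁ Γ(x) and Φ₋(x) := L ∫_{−1/2+√Δ}^{1/2−√Δ} Γ((x−μ)L) dμ − ε₁ Γ(x). Let χ be the characteristic function of the interval [−1/2, 1/2). Then Φ₋(x) ≤ χ(x) ≤ Φ₊(x) for all x ∈ ℝ, and ∫_{−∞}^{∞} Φ₊(x) dx = 1 + (2√Δ + ε₁) and ∫_{−∞}^{∞} Φ₋(x) dx = 1 − (2√Δ + ε₁). -/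
open MeasureTheory

/-- The Gaussian weight `Γ(x) = exp(−πx²)`. -/
noncomputable def gauss (x : ℝ) : ℝ := Real.exp (-Real.pi * x ^ 2)

namespace StmtAux

open Real Set Function

lemma gauss_nonneg (x : ℝ) : 0 ≤ gauss x := (Real.exp_pos _).le

lemma gauss_cont : Continuous gauss := by unfold gauss; continuity

lemma gauss_integrable : Integrable gauss := integrable_exp_neg_mul_sq Real.pi_pos

lemma gauss_integral : ∫ x : ℝ, gauss x = 1 := by
  have := integral_gaussian Real.pi
  simpa [gauss, div_self Real.pi_pos.ne'] using this

lemma gauss_even (x : ℝ) : gauss (-x) = gauss x := by simp [gauss]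

lemma gauss_le_of_sq_le {x y : ℝ} (h : y^2 ≤ x^2) : gauss x ≤ gauss y := by
  apply Real.exp_le_exp.2
  nlinarith [Real.pi_pos]

lemma transform {L : ℝ} (hL : 0 < L) (a b x : ℝ) :
    L * (∫ μ in a..b, gauss ((x - μ) * L)) = ∫ t in (x-b)*L..(x-a)*L, gauss t := by
  rw [intervalIntegral.integral_comp_sub_left (fun u => gauss (u * L)) x,
    intervalIntegral.integral_comp_mul_right _ hL.ne', smul_eq_mul, ← mul_assoc,
    mul_inv_cancel₀ hL.ne', one_mul]

lemma G_nonneg {a b : ℝ} (h : a ≤ b) : 0 ≤ ∫ t in a..b, gauss t :=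
  intervalIntegral.integral_nonneg h (fun t _ => gauss_nonneg t)

lemma G_nonpos {a b : ℝ} (h : b ≤ a) : (∫ t in a..b, gauss t) ≤ 0 := by
  rw [intervalIntegral.integral_symm]
  simpa using G_nonneg h

lemma G_le_one (a b : ℝ) : (∫ t in a..b, gauss t) ≤ 1 := by
  rcases le_total a b with h | h
  · rw [intervalIntegral.integral_of_le h, ← gauss_integral]
    exact setIntegral_le_integral gauss_integrable (Filter.Eventually.of_forall gauss_nonneg)
  · linarith [G_nonpos h]

lemma exp_tail (c : ℝ) :
    ∫ t in Ioi c, Real.exp (-(Real.pi * t)) = Real.exp (-(Real.pi*c)) / Real.pi := by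
  have h := integral_comp_mul_left_Ioi (fun u => Real.exp (-u)) c Real.pi_pos
  simp only [smul_eq_mul] at h
  rw [h, integral_exp_neg_Ioi]
  ring

lemma tail_le {c : ℝ} (hc : 1 ≤ c) : ∫ t in Ioi c, gauss t ≤ Real.exp (-Real.pi * c^2) := by
  have hpi := Real.pi_gt_three
  have key : ∀ t ∈ Ioi c, gauss t ≤ Real.exp (-Real.pi*(c^2 - c)) * Real.exp (-(Real.pi * t)) := by
    intro t ht
    rw [← Real.exp_add, gauss]
    apply Real.exp_le_exp.2
    have ht' : c ≤ t := le_of_lt ht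
    nlinarith [mul_nonneg (mul_nonneg Real.pi_pos.le (sub_nonneg.2 ht'))
      (show (0:ℝ) ≤ t + c - 1 by linarith)]
  have hint : IntegrableOn (fun t => Real.exp (-Real.pi*(c^2 - c)) * Real.exp (-(Real.pi * t)))
      (Ioi c) := by
    apply Integrable.const_mul
    have := exp_neg_integrableOn_Ioi c Real.pi_pos
    simp only [neg_mul] at this
    exact this
  calc ∫ t in Ioi c, gauss t
      ≤ ∫ t in Ioi c, Real.exp (-Real.pi*(c^2 - c)) * Real.exp (-(Real.pi * t)) :=
        setIntegral_mono_on gauss_integrable.integrableOn hint measurableSet_Ioi key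
    _ = Real.exp (-Real.pi*(c^2 - c)) * (Real.exp (-(Real.pi*c)) / Real.pi) := by
        rw [integral_const_mul, exp_tail]
    _ ≤ Real.exp (-Real.pi * c^2) := by
        rw [div_eq_mul_inv, ← mul_assoc, ← Real.exp_add]
        have h1 : Real.exp (-Real.pi * (c^2-c) + -(Real.pi*c)) = Real.exp (-Real.pi * c^2) := by
          congr 1; ring
        rw [h1]
        nth_rewrite 2 [← mul_one (Real.exp (-Real.pi * c^2))]
        apply mul_le_mul_of_nonneg_left _ (Real.exp_pos _).le
        exact inv_le_one_of_one_le₀ (by linarith)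

lemma G_sym (c : ℝ) : (∫ t in Ioi c, gauss t) = ∫ t in Iic (-c), gauss t := by
  rw [← integral_comp_neg_Ioi]
  simp [gauss]

lemma G_ge {a b c : ℝ} (hc : 1 ≤ c) (ha : a ≤ -c) (hb : c ≤ b) :
    1 - 2 * Real.exp (-Real.pi * c^2) ≤ ∫ t in a..b, gauss t := by
  have hmono : (∫ t in (-c)..c, gauss t) ≤ ∫ t in a..b, gauss t := by
    apply intervalIntegral.integral_mono_interval ha (by linarith) hb
      (Filter.Eventually.of_forall gauss_nonneg) gauss_integrable.intervalIntegrable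
  have h1 : (∫ t in (-c)..c, gauss t)
      = (∫ t in Iic c, gauss t) - ∫ t in Iic (-c), gauss t := by
    rw [intervalIntegral.integral_Iic_sub_Iic gauss_integrable.integrableOn
      gauss_integrable.integrableOn]
  have h2 : (∫ t in Iic c, gauss t) + ∫ t in Ioi c, gauss t = 1 := by
    rw [← gauss_integral]
    have := integral_add_compl (measurableSet_Iic (a := c)) gauss_integrable
    rwa [compl_Iic] at this
  have h3 := G_sym c
  have h4 := tail_le hc
  linarith

lemma G_le_tail {c d : ℝ} (h : c ≤ d) :
    (∫ t in c..d, gauss t) ≤ ∫ t in Ioi c, gauss t := by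
  rw [intervalIntegral.integral_of_le h]
  exact setIntegral_mono_set gauss_integrable.integrableOn
    (Filter.Eventually.of_forall gauss_nonneg)
    (HasSubset.Subset.eventuallyLE Ioc_subset_Ioi_self)

lemma slice_integrable {L : ℝ} (hL : 0 < L) (μ : ℝ) :
    Integrable (fun x : ℝ => gauss ((x - μ) * L)) := by
  have h1 : Integrable (fun x : ℝ => gauss (x * L)) := gauss_integrable.comp_mul_right' hL.ne'
  simpa [sub_mul] using h1.comp_sub_right μ

lemma slice_integral {L : ℝ} (hL : 0 < L) (μ : ℝ) :
    ∫ x : ℝ, gauss ((x - μ) * L) = L⁻¹ := by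
  have h1 : ∫ x : ℝ, gauss ((x - μ) * L) = ∫ x : ℝ, gauss (x * L) := by
    have := integral_sub_right_eq_self (μ := (volume : Measure ℝ))
      (fun x : ℝ => gauss (x * L)) μ
    simpa [sub_mul] using this
  rw [h1, Measure.integral_comp_mul_right gauss L, gauss_integral,
    abs_of_pos (inv_pos.2 hL), smul_eq_mul, mul_one]

lemma prod_integrable {L : ℝ} (hL : 0 < L) (a b : ℝ) :
    Integrable (uncurry fun x μ : ℝ => gauss ((x - μ) * L))
      ((volume : Measure ℝ).prod ((volume : Measure ℝ).restrict (Ioc a b))) := by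
  have hmeas : AEStronglyMeasurable (uncurry fun x μ : ℝ => gauss ((x - μ) * L))
      ((volume : Measure ℝ).prod ((volume : Measure ℝ).restrict (Ioc a b))) := by
    apply Continuous.aestronglyMeasurable
    exact gauss_cont.comp ((continuous_fst.sub continuous_snd).mul continuous_const)
  rw [integrable_prod_iff' hmeas]
  constructor
  · exact Filter.Eventually.of_forall fun μ => slice_integrable hL μ
  · refine (integrable_const (L⁻¹)).congr ?_
    refine Filter.Eventually.of_forall fun μ => ?_
    simp only [uncurry]
    rw [show (fun x : ℝ => ‖gauss ((x - μ) * L)‖) = fun x : ℝ => gauss ((x - μ) * L) from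
      funext fun x => Real.norm_of_nonneg (gauss_nonneg _)]
    exact (slice_integral hL μ).symm

lemma fubini_le {L : ℝ} (hL : 0 < L) {a b : ℝ} (hab : a ≤ b) :
    ∫ x : ℝ, (L * ∫ μ in a..b, gauss ((x - μ) * L)) = b - a := by
  have hswap := integral_integral_swap (prod_integrable hL a b)
  calc ∫ x : ℝ, (L * ∫ μ in a..b, gauss ((x - μ) * L))
      = L * ∫ x : ℝ, ∫ μ in Ioc a b, gauss ((x - μ) * L) := by
        rw [← integral_const_mul]
        congr 1; funext x
        rw [intervalIntegral.integral_of_le hab]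
    _ = L * ∫ μ in Ioc a b, ∫ x : ℝ, gauss ((x - μ) * L) := by rw [hswap]
    _ = L * ∫ μ in Ioc a b, (L⁻¹ : ℝ) := by
        congr 1
        exact setIntegral_congr_fun measurableSet_Ioc fun μ _ => slice_integral hL μ
    _ = b - a := by
        rw [setIntegral_const, smul_eq_mul, Real.volume_real_Ioc_of_le hab]
        field_simp

lemma fubini {L : ℝ} (hL : 0 < L) (a b : ℝ) :
    ∫ x : ℝ, (L * ∫ μ in a..b, gauss ((x - μ) * L)) = b - a := by
  rcases le_total a b with h | h
  · exact fubini_le hL h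
  · have h2 := fubini_le hL h
    have heq : ∀ x : ℝ, (L * ∫ μ in a..b, gauss ((x - μ) * L))
        = -(L * ∫ μ in b..a, gauss ((x - μ) * L)) := by
      intro x
      rw [intervalIntegral.integral_symm]
      ring
    simp_rw [heq]
    rw [integral_neg, h2]
    ring

lemma A_integrable {L : ℝ} (hL : 0 < L) (a b : ℝ) :
    Integrable (fun x : ℝ => L * ∫ μ in a..b, gauss ((x - μ) * L)) := by
  rcases le_total a b with h | h
  · have h1 := (prod_integrable hL a b).integral_prod_left
    have h2 := h1.const_mul L
    refine h2.congr (Filter.Eventually.of_forall fun x => ?_)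
    simp only [Function.uncurry_apply_pair]
    rw [intervalIntegral.integral_of_le h]
  · have h1 := (prod_integrable hL b a).integral_prod_left
    have h2 := (h1.const_mul L).neg
    refine h2.congr (Filter.Eventually.of_forall fun x => ?_)
    simp only [Pi.neg_apply, Function.uncurry_apply_pair]
    rw [intervalIntegral.integral_symm b a, intervalIntegral.integral_of_le h]
    ring

end StmtAux

open StmtAux

set_option maxHeartbeats 2000000 in
theorem stmt3 (L : ℝ) (hL : 2 < L) (Δ ε₁ : ℝ)
    (hΔ : Δ = 1 / L) (hε₁ : ε₁ = 24 * Real.exp (-L))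
    (Φp Φm : ℝ → ℝ)
    (hΦp : ∀ x, Φp x =
      L * (∫ μ in (-1/2 - Real.sqrt Δ)..(1/2 + Real.sqrt Δ), gauss ((x - μ) * L))
        + ε₁ * gauss x)
    (hΦm : ∀ x, Φm x =
      L * (∫ μ in (-1/2 + Real.sqrt Δ)..(1/2 - Real.sqrt Δ), gauss ((x - μ) * L))
        - ε₁ * gauss x) :
    (∀ x : ℝ,
      Φm x ≤ (Set.Ico (-(1 : ℝ)/2) (1/2)).indicator (fun _ => (1 : ℝ)) x ∧
      (Set.Ico (-(1 : ℝ)/2) (1/2)).indicator (fun _ => (1 : ℝ)) x ≤ Φp x) ∧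
    (∫ x : ℝ, Φp x) = 1 + (2 * Real.sqrt Δ + ε₁) ∧
    (∫ x : ℝ, Φm x) = 1 - (2 * Real.sqrt Δ + ε₁) := by
  have hL0 : (0:ℝ) < L := by linarith
  have hpi := Real.pi_gt_three
  set s := Real.sqrt Δ with hs
  set t := Real.sqrt L with htdef
  have ht2 : t ^ 2 = L := Real.sq_sqrt hL0.le
  have ht0 : 0 < t := Real.sqrt_pos.2 hL0
  have ht1 : 1 < t := by nlinarith
  have hsL : s * L = t := by
    rw [hs, hΔ, one_div, Real.sqrt_inv, ← htdef]
    field_simp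
    nlinarith
  have hs0 : 0 < s := by
    rw [hs, hΔ]
    exact Real.sqrt_pos.2 (by positivity)
  have hε₁0 : 0 < ε₁ := by rw [hε₁]; positivity
  clear_value s t
  -- small-exponential comparison used on [-1/2, 1/2)
  have hexp_in : ∀ x : ℝ, -1/2 ≤ x → x < 1/2 →
      2 * Real.exp (-Real.pi * L) ≤ ε₁ * gauss x := by
    intro x hx1 hx2
    rw [hε₁, gauss, mul_assoc, ← Real.exp_add]
    have hxsq : x ^ 2 ≤ 1/4 := by nlinarith
    have hle : -Real.pi * L ≤ -L + -Real.pi * x ^ 2 := by nlinarith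
    have := Real.exp_le_exp.2 hle
    nlinarith [Real.exp_pos (-Real.pi * L), Real.exp_pos (-L + -Real.pi * x ^ 2)]
  constructor
  · intro x
    constructor
    · -- Φm ≤ indicator
      rw [hΦm x]
      by_cases hx : x ∈ Set.Ico (-(1:ℝ)/2) (1/2)
      · rw [Set.indicator_of_mem hx]
        rw [transform hL0]
        have := G_le_one ((x - (1/2 - s)) * L) ((x - (-1/2 + s)) * L)
        nlinarith [gauss_nonneg x]
      · rw [Set.indicator_of_notMem hx]
        -- key estimate for z ≥ 1/2
        have key : ∀ z : ℝ, 1/2 ≤ z →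
            L * (∫ μ in (-1/2 + s)..(1/2 - s), gauss ((z - μ) * L)) ≤ ε₁ * gauss z := by
          intro z hz
          rw [transform hL0]
          rcases le_total (1/2 : ℝ) s with hcase | hcase
          · have hrev : (z - (-1/2 + s)) * L ≤ (z - (1/2 - s)) * L := by nlinarith
            have h0 := G_nonpos hrev
            nlinarith [gauss_nonneg z, mul_pos hε₁0 (Real.exp_pos (-Real.pi * z ^ 2))]
          · set c := (z - (1/2 - s)) * L with hc
            set d := (z - (-1/2 + s)) * L with hd
            clear_value c d
            have hcd : c ≤ d := by rw [hc, hd]; nlinarith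
            have hc1 : 1 ≤ c := by
              rw [hc]
              nlinarith
            have h1 : (∫ u in c..d, gauss u) ≤ Real.exp (-Real.pi * c ^ 2) :=
              le_trans (G_le_tail hcd) (tail_le hc1)
            have h2 : Real.exp (-Real.pi * c ^ 2) ≤ ε₁ * gauss z := by
              rw [hε₁, gauss, mul_assoc, ← Real.exp_add]
              have hle : -Real.pi * c ^ 2 ≤ -L + -Real.pi * z ^ 2 := by
                rw [hc]
                have hy : 0 ≤ z - 1/2 := by linarith
                set y := z - 1/2 with hy'
                clear_value y
                have hcy : (z - (1/2 - s)) * L = y * L + t := by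
                  rw [hy']; ring_nf; rw [← hsL]; ring
                rw [hcy]
                have e1 : 0 ≤ Real.pi * y^2 * (L^2 - 1) :=
                  mul_nonneg (mul_nonneg Real.pi_pos.le (sq_nonneg y)) (by nlinarith)
                have hLt : 2 < L * t := by nlinarith [mul_pos (sub_pos.2 hL) (sub_pos.2 ht1)]
                have e2 : 0 ≤ Real.pi * y * (2 * (L * t) - 1) :=
                  mul_nonneg (mul_nonneg Real.pi_pos.le hy) (by linarith)
                have e3 : L + Real.pi * (1/4:ℝ) ≤ Real.pi * L := by
                  nlinarith [mul_nonneg (show (0:ℝ) ≤ Real.pi - 1 by linarith)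
                    (show (0:ℝ) ≤ L - 2 by linarith)]
                have hz2 : z = y + 1/2 := by rw [hy']; ring
                have expand : -Real.pi * (y * L + t)^2
                    = -(Real.pi * y^2 * L^2 + Real.pi * y * (2 * (L * t)) + Real.pi * L) := by
                  rw [← ht2]; ring
                rw [hz2, expand]
                have expand2 : -Real.pi * (y + 1/2:ℝ)^2
                    = -(Real.pi * y^2 + Real.pi * y + Real.pi * (1/4:ℝ)) := by ring
                rw [expand2]
                nlinarith [e1, e2, e3]
              calc Real.exp (-Real.pi * c ^ 2) ≤ Real.exp (-L + -Real.pi * z ^ 2) :=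
                    Real.exp_le_exp.2 hle
                _ ≤ 24 * Real.exp (-L + -Real.pi * z ^ 2) := by
                    nlinarith [Real.exp_pos (-L + -Real.pi * z ^ 2)]
            linarith
        rcases lt_or_ge x (-1/2 : ℝ) with hxl | hxr
        · -- use symmetry
          have hsym : (∫ μ in (-1/2 + s)..(1/2 - s), gauss ((x - μ) * L))
              = ∫ μ in (-1/2 + s)..(1/2 - s), gauss ((-x - μ) * L) := by
            have h0 : (∫ μ in (-1/2 + s)..(1/2 - s), gauss ((x - μ) * L))
                = ∫ μ in (-1/2 + s)..(1/2 - s), gauss ((-x - -μ) * L) := by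
              apply intervalIntegral.integral_congr
              intro μ _
              show gauss ((x - μ) * L) = gauss ((-x - -μ) * L)
              rw [show (-x - -μ) * L = -((x - μ) * L) by ring, gauss_even]
            have h1 := intervalIntegral.integral_comp_neg
              (f := fun μ => gauss ((-x - μ) * L)) (a := (-1/2 + s)) (b := (1/2 - s))
            rw [h0, h1, show -(1/2 - s) = -1/2 + s by ring, show -(-1/2 + s) = 1/2 - s by ring]
          have hgx : gauss x = gauss (-x) := (gauss_even x).symm
          rw [hsym, hgx]
          have := key (-x) (by linarith)
          linarith
        · have hx2 : 1/2 ≤ x := by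
            by_contra hcon
            push_neg at hcon
            exact hx ⟨by simpa using hxr, hcon⟩
          have := key x hx2
          linarith
    · -- indicator ≤ Φp
      rw [hΦp x]
      by_cases hx : x ∈ Set.Ico (-(1:ℝ)/2) (1/2)
      · rw [Set.indicator_of_mem hx]
        obtain ⟨hx1, hx2⟩ := hx
        have hx1' : -1/2 ≤ x := by simpa using hx1
        rw [transform hL0]
        have hge : 1 - 2 * Real.exp (-Real.pi * t ^ 2)
            ≤ ∫ u in (x - (1/2 + s)) * L..(x - (-1/2 - s)) * L, gauss u := by
          apply G_ge ht1.le
          · nlinarith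
          · nlinarith
        rw [ht2] at hge
        have := hexp_in x hx1' hx2
        linarith
      · rw [Set.indicator_of_notMem hx]
        have h1 : 0 ≤ ∫ μ in (-1/2 - s)..(1/2 + s), gauss ((x - μ) * L) :=
          intervalIntegral.integral_nonneg (by linarith) (fun μ _ => gauss_nonneg _)
        nlinarith [gauss_nonneg x]
  · constructor
    · simp only [hΦp]
      rw [integral_add (A_integrable hL0 _ _) (gauss_integrable.const_mul ε₁),
        fubini hL0, integral_const_mul, gauss_integral]
      ring
    · simp only [hΦm]
      rw [integral_sub (A_integrable hL0 _ _) (gauss_integrable.const_mul ε₁),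
        fubini hL0, integral_const_mul, gauss_integral]
      ring
end

section
/- Let a < b be real numbers and let χ_{[a,b)} be the characteristic function of [a,b). Let L > 2, set Δ := 1/L and ε₁ := 24 exp(−L), and define Φ₊^{a,b}(x) := L ∫_{−1/2−√Δ}^{1/2+√Δ} Γ(((x−a)/(b−a) − 1/2 − μ)L) dμ + ε₁ Γ((x−a)/(b−a) − 1/2) and Φ₋^{a,b}(x) := L ∫_{−1/2+√Δ}^{1/2−√Δ} Γ(((x−a)/(b−a) − 1/2 − μ)L) dμ − ε₁ Γ((x−a)/(b−a) − 1/2). Then Φ₋^{a,b}(x) ≤ χ_{[a,b)}(x) ≤ Φ₊^{a,b}(x) for all x ∈ ℝ, and ∫_{−∞}^{∞} Φ₊^{a,b}(x) dx = (1 + (2√Δ + ε₁))(b−a) and ∫_{−∞}^{∞} Φ₋^{a,b}(x) dx = (1 − (2√Δ + ε₁))(b−a). -/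
open MeasureTheory

lemma gauss_nonneg (x : ℝ) : 0 ≤ gauss x := (Real.exp_pos _).le

lemma gauss_continuous : Continuous gauss := by unfold gauss; fun_prop

lemma gauss_integrable : Integrable gauss := integrable_exp_neg_mul_sq Real.pi_pos

lemma gauss_integral : ∫ x : ℝ, gauss x = 1 := by
  have h := integral_gaussian Real.pi
  unfold gauss
  rw [h, div_self Real.pi_ne_zero, Real.sqrt_one]

lemma gauss_affine_integrable {k : ℝ} (hk : k ≠ 0) (t : ℝ) :
    Integrable (fun x : ℝ => gauss ((x - t) * k)) := by
  have h1 : Integrable (fun x : ℝ => gauss (x * k)) := gauss_integrable.comp_mul_right' hk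
  exact h1.comp_sub_right t

lemma gauss_affine_integral {k : ℝ} (hk : 0 < k) (t : ℝ) :
    ∫ x : ℝ, gauss ((x - t) * k) = 1 / k := by
  have h1 : (∫ x : ℝ, gauss ((x - t) * k)) = ∫ x : ℝ, gauss (x * k) :=
    integral_sub_right_eq_self (fun x => gauss (x * k)) t
  rw [h1, Measure.integral_comp_mul_right gauss k, gauss_integral, smul_eq_mul, mul_one,
    abs_of_pos (inv_pos.2 hk), one_div]

lemma gauss_tail {c : ℝ} (hc : 0 ≤ c) :
    ∫ x in Set.Ioi c, gauss x ≤ 2 * Real.exp (-(Real.pi * c ^ 2) / 2) := by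
  have h2 : (0:ℝ) < Real.pi / 2 := by positivity
  have hint2 : Integrable (fun x : ℝ => Real.exp (-(Real.pi / 2) * x ^ 2)) :=
    integrable_exp_neg_mul_sq h2
  have step1 : ∫ x in Set.Ioi c, gauss x
      ≤ ∫ x in Set.Ioi c, Real.exp (-(Real.pi * c ^ 2) / 2) * Real.exp (-(Real.pi / 2) * x ^ 2) := by
    refine setIntegral_mono_on gauss_integrable.integrableOn
      ((hint2.const_mul _).integrableOn) measurableSet_Ioi ?_
    intro x hx
    have hx' : c < x := hx
    have hcx : c ^ 2 ≤ x ^ 2 := by nlinarith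
    unfold gauss
    rw [← Real.exp_add]
    apply Real.exp_le_exp.2
    nlinarith [Real.pi_pos]
  have step2 : ∫ x in Set.Ioi c, Real.exp (-(Real.pi * c ^ 2) / 2) * Real.exp (-(Real.pi / 2) * x ^ 2)
      = Real.exp (-(Real.pi * c ^ 2) / 2) * ∫ x in Set.Ioi c, Real.exp (-(Real.pi / 2) * x ^ 2) :=
    integral_const_mul _ _
  have step3 : ∫ x in Set.Ioi c, Real.exp (-(Real.pi / 2) * x ^ 2)
      ≤ ∫ x : ℝ, Real.exp (-(Real.pi / 2) * x ^ 2) :=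
    setIntegral_le_integral hint2 (ae_of_all _ fun x => (Real.exp_pos _).le)
  have step4 : (∫ x : ℝ, Real.exp (-(Real.pi / 2) * x ^ 2)) = Real.sqrt 2 := by
    rw [integral_gaussian]
    congr 1
    field_simp
  have h5 : Real.sqrt 2 ≤ 2 := by
    nlinarith [Real.sq_sqrt (by norm_num : (0:ℝ) ≤ 2), Real.sqrt_nonneg 2]
  calc ∫ x in Set.Ioi c, gauss x ≤ _ := step1
    _ = _ := step2
    _ ≤ Real.exp (-(Real.pi * c ^ 2) / 2) * 2 := by
        have := (Real.exp_pos (-(Real.pi * c ^ 2) / 2)).le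
        have h6 := step3.trans (step4.le.trans h5)
        exact mul_le_mul_of_nonneg_left h6 this
    _ = 2 * Real.exp (-(Real.pi * c ^ 2) / 2) := mul_comm _ _

lemma gauss_interval_eq {c : ℝ} (hc : 0 ≤ c) :
    ∫ x in (-c)..c, gauss x = 1 - 2 * ∫ x in Set.Ioi c, gauss x := by
  have hint := gauss_integrable
  have h1 : (∫ x in Set.Ioi (-c), gauss x) + ∫ x in Set.Iic (-c), gauss x = 1 := by
    rw [← gauss_integral]
    have := integral_add_compl (measurableSet_Ioi (a := -c)) hint
    rwa [Set.compl_Ioi] at this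
  have h2 : (∫ x in Set.Iic (-c), gauss x) = ∫ x in Set.Ioi c, gauss x := by
    have h := integral_comp_neg_Iic (-c) gauss
    rw [neg_neg] at h
    rw [← h]
    apply setIntegral_congr_fun measurableSet_Iic
    intro x _
    simp [gauss]
  have h3 : Set.Ioc (-c) c ∪ Set.Ioi c = Set.Ioi (-c) :=
    Set.Ioc_union_Ioi_eq_Ioi (by linarith)
  have h4 : (∫ x in Set.Ioi (-c), gauss x)
      = (∫ x in Set.Ioc (-c) c, gauss x) + ∫ x in Set.Ioi c, gauss x := by
    rw [← h3, setIntegral_union (Set.Ioc_disjoint_Ioi le_rfl) measurableSet_Ioi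
      hint.integrableOn hint.integrableOn]
  rw [intervalIntegral.integral_of_le (by linarith : -c ≤ c)]
  linarith

lemma gauss_interval_le_one (p q : ℝ) : ∫ x in p..q, gauss x ≤ 1 := by
  rcases le_total p q with h | h
  · rw [intervalIntegral.integral_of_le h, ← gauss_integral]
    exact setIntegral_le_integral gauss_integrable (ae_of_all _ gauss_nonneg)
  · rw [intervalIntegral.integral_symm]
    have : 0 ≤ ∫ x in q..p, gauss x :=
      intervalIntegral.integral_nonneg h (fun u _ => gauss_nonneg u)
    linarith

lemma gauss_interval_transform (y L c d : ℝ) (hL : 0 < L) :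
    ∫ μ in c..d, gauss ((y - μ) * L) = L⁻¹ * ∫ ν in ((y - d) * L)..((y - c) * L), gauss ν := by
  rw [intervalIntegral.integral_comp_sub_left (fun u => gauss (u * L)) y,
    intervalIntegral.integral_comp_mul_right gauss hL.ne', smul_eq_mul]


lemma fubini_le (a b L : ℝ) (hab : a < b) (hL : 0 < L) (c d : ℝ) (hcd : c ≤ d) :
    Integrable (fun x : ℝ => ∫ μ in c..d, gauss (((x - a)/(b - a) - 1/2 - μ) * L)) volume ∧
    (∫ x : ℝ, ∫ μ in c..d, gauss (((x - a)/(b - a) - 1/2 - μ) * L))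
      = (d - c) * (b - a) / L := by
  have hba : (0:ℝ) < b - a := by linarith
  have hcont0 : Continuous (fun p : ℝ × ℝ => gauss (((p.1 - a)/(b - a) - 1/2 - p.2) * L)) := by
    apply gauss_continuous.comp
    fun_prop
  set ν := volume.restrict (Set.Ioc c d) with hν
  set F : ℝ → ℝ → ℝ := fun x μ => gauss (((x - a)/(b - a) - 1/2 - μ) * L) with hF
  have hcontF : Continuous (Function.uncurry F) := hcont0
  -- dominating function
  have h0 : (0:ℝ) < Real.pi * L ^ 2 / 2 := by positivity
  have hg1 : Integrable (fun x : ℝ =>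
      Real.exp (-(Real.pi * L ^ 2 / 2) * ((x - a)/(b - a) - 1/2) ^ 2)) := by
    have h1 := integrable_exp_neg_mul_sq h0
    have h2 := h1.comp_mul_right' (inv_ne_zero hba.ne')
    have h3 := h2.comp_sub_right (a + (b - a) / 2)
    have key : ∀ x : ℝ, (x - (a + (b - a) / 2)) * (b - a)⁻¹ = (x - a)/(b - a) - 1/2 := by
      intro x; field_simp; ring
    refine h3.congr (ae_of_all _ fun x => ?_)
    simp only [key]
  have hg2 : Integrable (fun μ : ℝ => Real.exp (Real.pi * L ^ 2 * μ ^ 2)) ν := by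
    refine (Continuous.integrableOn_Ioc (by fun_prop))
  have hH : Integrable (fun p : ℝ × ℝ =>
      Real.exp (-(Real.pi * L ^ 2 / 2) * ((p.1 - a)/(b - a) - 1/2) ^ 2)
        * Real.exp (Real.pi * L ^ 2 * p.2 ^ 2)) (volume.prod ν) :=
    hg1.mul_prod hg2
  have hFint : Integrable (Function.uncurry F) (volume.prod ν) := by
    refine hH.mono hcontF.aestronglyMeasurable (ae_of_all _ fun p => ?_)
    have heq : Function.uncurry F p = gauss (((p.1 - a)/(b - a) - 1/2 - p.2) * L) := rfl
    set y := (p.1 - a)/(b - a) - 1/2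
    clear_value y
    have hle : gauss ((y - p.2) * L)
        ≤ Real.exp (-(Real.pi * L ^ 2 / 2) * y ^ 2) * Real.exp (Real.pi * L ^ 2 * p.2 ^ 2) := by
      rw [← Real.exp_add]
      unfold gauss
      apply Real.exp_le_exp.2
      nlinarith [mul_nonneg (mul_pos Real.pi_pos (pow_pos hL 2)).le (sq_nonneg (y - 2 * p.2))]
    have h1 : ‖Function.uncurry F p‖ = gauss ((y - p.2) * L) := by
      rw [heq, Real.norm_eq_abs, abs_of_nonneg (gauss_nonneg _)]
    rw [h1, Real.norm_eq_abs, abs_of_nonneg (by positivity : (0:ℝ) ≤ Real.exp _ * Real.exp _)]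
    exact hle
  have hIcc : (fun x => ∫ μ in c..d, F x μ) = fun x => ∫ μ, F x μ ∂ν := by
    funext x
    rw [intervalIntegral.integral_of_le hcd]
  have hswap := integral_integral_swap hFint
  have hinner : ∀ μ : ℝ, (∫ x : ℝ, F x μ) = (b - a) / L := by
    intro μ
    have hk : (0:ℝ) < L / (b - a) := by positivity
    have h := gauss_affine_integral hk (a + (1/2 + μ) * (b - a))
    rw [one_div_div] at h
    have key : ∀ x : ℝ, (x - (a + (1/2 + μ) * (b - a))) * (L / (b - a))
        = ((x - a)/(b - a) - 1/2 - μ) * L := by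
      intro x
      field_simp
      ring
    simp only [hF]
    rw [← h]
    apply integral_congr_ae
    filter_upwards with x
    rw [key x]
  have houter2 : (∫ _ : ℝ, (b - a) / L ∂ν) = (d - c) * (b - a) / L := by
    rw [hν, setIntegral_const, measureReal_def, Real.volume_Ioc, ENNReal.toReal_ofReal (by linarith),
      smul_eq_mul, mul_div_assoc]
  have houter := houter2
  constructor
  · have h1 := hFint.integral_prod_left
    rw [hIcc]
    exact h1
  · rw [hIcc]
    calc (∫ x : ℝ, ∫ μ, F x μ ∂ν) = ∫ μ, (∫ x : ℝ, F x μ) ∂ν := hswap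
      _ = ∫ _ : ℝ, (b - a) / L ∂ν := by
          apply integral_congr_ae
          filter_upwards with μ using hinner μ
      _ = (d - c) * (b - a) / L := houter

lemma fubini_piece (a b L : ℝ) (hab : a < b) (hL : 0 < L) (c d : ℝ) :
    Integrable (fun x : ℝ => ∫ μ in c..d, gauss (((x - a)/(b - a) - 1/2 - μ) * L)) volume ∧
    (∫ x : ℝ, ∫ μ in c..d, gauss (((x - a)/(b - a) - 1/2 - μ) * L))
      = (d - c) * (b - a) / L := by
  rcases le_total c d with h | h
  · exact fubini_le a b L hab hL c d h
  · obtain ⟨h1, h2⟩ := fubini_le a b L hab hL d c h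
    have hsymm : (fun x : ℝ => ∫ μ in c..d, gauss (((x - a)/(b - a) - 1/2 - μ) * L))
        = fun x : ℝ => -∫ μ in d..c, gauss (((x - a)/(b - a) - 1/2 - μ) * L) := by
      funext x
      rw [intervalIntegral.integral_symm]
    constructor
    · rw [hsymm]; exact h1.neg
    · rw [hsymm, integral_neg, h2]
      ring

lemma log24 : (3:ℝ) ≤ Real.log 24 := by
  rw [Real.le_log_iff_exp_le (by norm_num)]
  have h : Real.exp 3 = (Real.exp 1) ^ (3:ℕ) := by
    rw [← Real.exp_nat_mul]; norm_num
  rw [h]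
  have h9 := Real.exp_one_lt_d9
  have hp := Real.exp_pos 1
  nlinarith [pow_lt_pow_left₀ h9 hp.le (n := 3) (by norm_num)]

lemma keyineq (L w v : ℝ) (hL : 2 < L) (hw2 : w ^ 2 = L) (hw1 : 1 < w) (hv : 0 ≤ v) :
    Real.pi * (v + 1/2) ^ 2 + 2 * L - 4 ≤ Real.pi * (v * L + w) ^ 2 := by
  have hpi := Real.pi_gt_three
  nlinarith [mul_nonneg (mul_nonneg hv hv) (by nlinarith : (0:ℝ) ≤ L^2 - 1),
    mul_nonneg hv (by nlinarith : (0:ℝ) ≤ 2*L*w - 1), Real.pi_pos, sq_nonneg v]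

lemma num2 (L : ℝ) (hL : 2 < L) :
    2 * (2 * Real.exp (-(Real.pi * L) / 2)) ≤ 24 * Real.exp (-L) * Real.exp (-Real.pi / 4) := by
  have hpi := Real.pi_gt_three
  have h1 : Real.exp (-(Real.pi * L) / 2) ≤ Real.exp (-L - Real.pi / 4) := by
    apply Real.exp_le_exp.2; nlinarith
  calc 2 * (2 * Real.exp (-(Real.pi * L) / 2)) = 4 * Real.exp (-(Real.pi * L) / 2) := by ring
    _ ≤ 4 * Real.exp (-L - Real.pi / 4) := by linarith [h1]
    _ ≤ 24 * Real.exp (-L - Real.pi / 4) := by nlinarith [Real.exp_pos (-L - Real.pi / 4)]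
    _ = 24 * Real.exp (-L) * Real.exp (-Real.pi / 4) := by
        rw [show -L - Real.pi / 4 = -L + -Real.pi/4 by ring, Real.exp_add]; ring

set_option maxHeartbeats 1000000 in
theorem stmt4 (a b : ℝ) (hab : a < b) (L : ℝ) (hL : 2 < L) (Δ ε₁ : ℝ)
    (hΔ : Δ = 1 / L) (hε₁ : ε₁ = 24 * Real.exp (-L))
    (Φp Φm : ℝ → ℝ)
    (hΦp : ∀ x, Φp x =
      L * (∫ μ in (-1/2 - Real.sqrt Δ)..(1/2 + Real.sqrt Δ),
          gauss (((x - a)/(b - a) - 1/2 - μ) * L))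
        + ε₁ * gauss ((x - a)/(b - a) - 1/2))
    (hΦm : ∀ x, Φm x =
      L * (∫ μ in (-1/2 + Real.sqrt Δ)..(1/2 - Real.sqrt Δ),
          gauss (((x - a)/(b - a) - 1/2 - μ) * L))
        - ε₁ * gauss ((x - a)/(b - a) - 1/2)) :
    (∀ x : ℝ,
      Φm x ≤ (Set.Ico a b).indicator (fun _ => (1 : ℝ)) x ∧
      (Set.Ico a b).indicator (fun _ => (1 : ℝ)) x ≤ Φp x) ∧
    (∫ x : ℝ, Φp x) = (1 + (2 * Real.sqrt Δ + ε₁)) * (b - a) ∧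
    (∫ x : ℝ, Φm x) = (1 - (2 * Real.sqrt Δ + ε₁)) * (b - a) := by
  have hba : (0:ℝ) < b - a := by linarith
  have hL0 : (0:ℝ) < L := by linarith
  have hε₁pos : 0 < ε₁ := by rw [hε₁]; positivity
  -- integral parts first (before introducing abbreviation s)
  have hshift : Integrable (fun x : ℝ => gauss ((x - a)/(b - a) - 1/2)) ∧
      (∫ x : ℝ, gauss ((x - a)/(b - a) - 1/2)) = b - a := by
    have key : ∀ x : ℝ, (x - (a + (b - a)/2)) * (b - a)⁻¹ = (x - a)/(b - a) - 1/2 := by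
      intro x; field_simp; ring
    constructor
    · have h := gauss_affine_integrable (inv_ne_zero hba.ne') (a + (b - a)/2)
      refine h.congr (ae_of_all _ fun x => ?_)
      simp only [key]
    · have h := gauss_affine_integral (inv_pos.2 hba) (a + (b - a)/2)
      rw [one_div, inv_inv] at h
      calc (∫ x : ℝ, gauss ((x - a)/(b - a) - 1/2))
          = ∫ x : ℝ, gauss ((x - (a + (b - a)/2)) * (b - a)⁻¹) := by
            apply integral_congr_ae
            filter_upwards with x
            rw [key x]
        _ = b - a := h
  have hintp : (∫ x : ℝ, Φp x) = (1 + (2 * Real.sqrt Δ + ε₁)) * (b - a) := by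
    obtain ⟨hI, hval⟩ := fubini_piece a b L hab hL0 (-1/2 - Real.sqrt Δ) (1/2 + Real.sqrt Δ)
    have hfun : Φp = fun x => L * (∫ μ in (-1/2 - Real.sqrt Δ)..(1/2 + Real.sqrt Δ),
        gauss (((x - a)/(b - a) - 1/2 - μ) * L)) + ε₁ * gauss ((x - a)/(b - a) - 1/2) :=
      funext hΦp
    rw [hfun, integral_add (hI.const_mul L) (hshift.1.const_mul ε₁),
      integral_const_mul, integral_const_mul, hval, hshift.2]
    field_simp
    ring
  have hintm : (∫ x : ℝ, Φm x) = (1 - (2 * Real.sqrt Δ + ε₁)) * (b - a) := by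
    obtain ⟨hI, hval⟩ := fubini_piece a b L hab hL0 (-1/2 + Real.sqrt Δ) (1/2 - Real.sqrt Δ)
    have hfun : Φm = fun x => L * (∫ μ in (-1/2 + Real.sqrt Δ)..(1/2 - Real.sqrt Δ),
        gauss (((x - a)/(b - a) - 1/2 - μ) * L)) - ε₁ * gauss ((x - a)/(b - a) - 1/2) :=
      funext hΦm
    rw [hfun, integral_sub (hI.const_mul L) (hshift.1.const_mul ε₁),
      integral_const_mul, integral_const_mul, hval, hshift.2]
    field_simp
    ring
  refine ⟨?_, hintp, hintm⟩
  -- pointwise bounds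
  set s := Real.sqrt Δ with hs
  set w := Real.sqrt L with hw
  have hw2 : w ^ 2 = L := Real.sq_sqrt hL0.le
  have hw1 : 1 < w := by
    have h := Real.sqrt_lt_sqrt (by norm_num : (0:ℝ) ≤ 1) (by linarith : (1:ℝ) < L)
    rw [Real.sqrt_one] at h
    exact h
  have hsw : s = w⁻¹ := by rw [hs, hw, hΔ, one_div, Real.sqrt_inv]
  have hs_pos : 0 < s := by rw [hsw]; positivity
  have hsL : s * L = w := by
    rw [hsw, ← hw2]; field_simp
  have hpi := Real.pi_gt_three
  intro x
  by_cases hx : x ∈ Set.Ico a b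
  · -- x ∈ [a, b)
    rw [Set.indicator_of_mem hx]
    have hd0 : 0 ≤ (x - a)/(b - a) := div_nonneg (by linarith [hx.1]) hba.le
    have hd1 : (x - a)/(b - a) < 1 := (div_lt_one hba).2 (by linarith [hx.2])
    have hp' := hΦp x
    have hm' := hΦm x
    set y := (x - a)/(b - a) - 1/2 with hydef
    have hy1 : -(1/2:ℝ) ≤ y := by rw [hydef]; linarith
    have hy2 : y < 1/2 := by rw [hydef]; linarith
    clear_value y
    constructor
    · -- Φm x ≤ 1
      rw [hm']
      have htr := gauss_interval_transform y L (-1/2 + s) (1/2 - s) hL0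
      rw [htr, ← mul_assoc, mul_inv_cancel₀ hL0.ne', one_mul]
      have h1 := gauss_interval_le_one ((y - (1/2 - s)) * L) ((y - (-1/2 + s)) * L)
      have h2 := mul_nonneg hε₁pos.le (gauss_nonneg y)
      linarith
    · -- 1 ≤ Φp x
      rw [hp']
      have htr := gauss_interval_transform y L (-1/2 - s) (1/2 + s) hL0
      rw [htr, ← mul_assoc, mul_inv_cancel₀ hL0.ne', one_mul]
      have hpw : (y - (1/2 + s)) * L ≤ -w := by
        nlinarith [mul_nonneg (by linarith : (0:ℝ) ≤ 1/2 - y) hL0.le]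
      have hqw : w ≤ (y - (-1/2 - s)) * L := by
        nlinarith [mul_nonneg (by linarith : (0:ℝ) ≤ y + 1/2) hL0.le]
      have hmono : (∫ ν in (-w)..w, gauss ν)
          ≤ ∫ ν in ((y - (1/2 + s)) * L)..((y - (-1/2 - s)) * L), gauss ν :=
        intervalIntegral.integral_mono_interval hpw
          (by linarith : -w ≤ w) hqw (ae_of_all _ gauss_nonneg)
          (gauss_continuous.intervalIntegrable _ _)
      rw [gauss_interval_eq (by linarith : (0:ℝ) ≤ w)] at hmono
      have htail := gauss_tail (by linarith : (0:ℝ) ≤ w)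
      have hgy : Real.exp (-Real.pi / 4) ≤ gauss y := by
        unfold gauss
        apply Real.exp_le_exp.2
        nlinarith [mul_nonneg Real.pi_pos.le
          (mul_nonneg (by linarith : (0:ℝ) ≤ 1/2 - y) (by linarith : (0:ℝ) ≤ y + 1/2))]
      have hnum : 2 * (2 * Real.exp (-(Real.pi * w ^ 2) / 2)) ≤ ε₁ * Real.exp (-Real.pi / 4) := by
        rw [hε₁, hw2]
        exact num2 L hL
      have hmul : ε₁ * Real.exp (-Real.pi / 4) ≤ ε₁ * gauss y :=
        mul_le_mul_of_nonneg_left hgy hε₁pos.le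
      linarith
  · -- x ∉ [a, b)
    rw [Set.indicator_of_notMem hx]
    rw [Set.mem_Ico, not_and_or, not_le, not_lt] at hx
    have hp' := hΦp x
    have hm' := hΦm x
    have hd : (x - a)/(b - a) < 0 ∨ 1 ≤ (x - a)/(b - a) := by
      rcases hx with h | h
      · exact Or.inl (div_neg_of_neg_of_pos (by linarith) hba)
      · exact Or.inr ((one_le_div hba).2 (by linarith))
    set y := (x - a)/(b - a) - 1/2 with hydef
    have hy' : y < -(1/2) ∨ (1/2:ℝ) ≤ y := by
      rcases hd with h | h
      · exact Or.inl (by rw [hydef]; linarith)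
      · exact Or.inr (by rw [hydef]; linarith)
    clear_value y
    have habs : (1/2:ℝ) ≤ |y| := by
      rcases hy' with h | h
      · exact le_abs.2 (Or.inr (by linarith))
      · exact le_abs.2 (Or.inl h)
    constructor
    · -- Φm x ≤ 0
      rw [hm']
      rcases le_or_gt (1/2 : ℝ) s with hs2 | hs2
      · have hJ : (∫ μ in (-1/2 + s)..(1/2 - s), gauss ((y - μ) * L)) ≤ 0 := by
          rw [intervalIntegral.integral_symm]
          have h0 : 0 ≤ ∫ μ in (1/2 - s)..(-1/2 + s), gauss ((y - μ) * L) :=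
            intervalIntegral.integral_nonneg (by linarith) (fun u _ => gauss_nonneg _)
          linarith
        have h2 : L * (∫ μ in (-1/2 + s)..(1/2 - s), gauss ((y - μ) * L)) ≤ 0 :=
          mul_nonpos_iff.2 (Or.inl ⟨hL0.le, hJ⟩)
        have h3 := mul_nonneg hε₁pos.le (gauss_nonneg y)
        linarith
      · -- s < 1/2
        set v := |y| - 1/2 with hv
        have hv0 : 0 ≤ v := by rw [hv]; linarith
        have hbound : ∀ μ ∈ Set.Icc (-1/2 + s) (1/2 - s),
            gauss ((y - μ) * L) ≤ gauss ((v + s) * L) := by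
          intro μ hμ
          unfold gauss
          apply Real.exp_le_exp.2
          have h1 : v + s ≤ |y - μ| := by
            have ht := abs_sub_abs_le_abs_sub y μ
            have hμa : |μ| ≤ 1/2 - s := abs_le.2 ⟨by linarith [hμ.1], by linarith [hμ.2]⟩
            rw [hv]; linarith
          have h2 : 0 < v + s := by linarith
          nlinarith [mul_self_le_mul_self h2.le h1, sq_abs (y - μ),
            mul_pos (mul_pos Real.pi_pos hL0) hL0]
        have hcont1 : Continuous fun μ : ℝ => gauss ((y - μ) * L) :=
          gauss_continuous.comp (by fun_prop)
        have hmono : (∫ μ in (-1/2 + s)..(1/2 - s), gauss ((y - μ) * L))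
            ≤ ∫ _ in (-1/2 + s)..(1/2 - s), gauss ((v + s) * L) :=
          intervalIntegral.integral_mono_on (by linarith : (-1/2 + s : ℝ) ≤ 1/2 - s)
            (hcont1.intervalIntegrable _ _) intervalIntegrable_const hbound
        rw [intervalIntegral.integral_const, smul_eq_mul] at hmono
        have hKpos : 0 ≤ gauss ((v + s) * L) := gauss_nonneg _
        have hJle : L * (∫ μ in (-1/2 + s)..(1/2 - s), gauss ((y - μ) * L))
            ≤ L * gauss ((v + s) * L) := by
          have h3 : (1/2 - s - (-1/2 + s)) * gauss ((v + s) * L) ≤ gauss ((v + s) * L) := by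
            nlinarith
          exact mul_le_mul_of_nonneg_left (hmono.trans h3) hL0.le
        have hfin : L * gauss ((v + s) * L) ≤ ε₁ * gauss y := by
          have habsy : |y| = v + 1/2 := by rw [hv]; ring
          have hysq : y ^ 2 = (v + 1/2) ^ 2 := by rw [← sq_abs y, habsy]
          unfold gauss
          rw [hε₁, hysq]
          have hlogL : Real.log L ≤ L - 1 := Real.log_le_sub_one_of_pos hL0
          have h24 := log24
          have hvsL : (v + s) * L = v * L + w := by rw [add_mul, hsL]
          have hkey := keyineq L w v hL hw2 hw1 hv0
          calc L * Real.exp (-Real.pi * ((v + s) * L) ^ 2)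
              = Real.exp (Real.log L + -Real.pi * ((v + s) * L) ^ 2) := by
                rw [Real.exp_add, Real.exp_log hL0]
            _ ≤ Real.exp (Real.log 24 + (-L + -Real.pi * (v + 1/2) ^ 2)) := by
                apply Real.exp_le_exp.2
                rw [hvsL]
                linarith
            _ = 24 * Real.exp (-L) * Real.exp (-Real.pi * (v + 1/2) ^ 2) := by
                rw [Real.exp_add, Real.exp_add, Real.exp_log (by norm_num : (0:ℝ) < 24)]
                ring
        linarith
    · -- 0 ≤ Φp x
      rw [hp']
      have h1 : 0 ≤ ∫ μ in (-1/2 - s)..(1/2 + s), gauss ((y - μ) * L) :=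
        intervalIntegral.integral_nonneg (by linarith) (fun u _ => gauss_nonneg _)
      have h2 := mul_nonneg hε₁pos.le (gauss_nonneg y)
      nlinarith [mul_nonneg hL0.le h1]
end

section
/- There is an absolute constant C such that for all β > 0 and all α ∈ ℝ with |α| ≥ 1/β, |F(α, β)| ≤ C exp(−π|α|/(12β)). -/
open MeasureTheory

/-- `F(α,β) = ∫_{−∞}^{∞} Γ(x) e(−βx³ − αx) dx`, where `e(x) = exp(2πix)`. -/
noncomputable def Fab (α β : ℝ) : ℂ :=
  ∫ x : ℝ, (gauss x : ℂ) * Complex.exp (2 * Real.pi * Complex.I * ((-β * x ^ 3 - α * x : ℝ) : ℂ))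

open Real Complex Filter intervalIntegral

noncomputable def gg (α β : ℝ) (z : ℂ) : ℂ :=
  Complex.exp (-(Real.pi : ℂ) * z ^ 2 + 2 * Real.pi * Complex.I * (-(β:ℂ) * z ^ 3 - (α:ℂ) * z))

lemma norm_gg (α β x y : ℝ) :
    ‖gg α β (x + y * Complex.I)‖ =
      Real.exp (-Real.pi * x ^ 2 + Real.pi * y ^ 2 + 6 * Real.pi * β * y * x ^ 2
        - 2 * Real.pi * β * y ^ 3 + 2 * Real.pi * α * y) := by
  rw [gg, Complex.norm_exp]
  congr 1
  simp [Complex.add_re, Complex.mul_re, Complex.mul_im, pow_succ, Complex.add_im]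
  ring

noncomputable def KK (α β c : ℝ) : ℝ :=
  Real.pi * c ^ 2 + 2 * Real.pi * β * |c| ^ 3 + 2 * Real.pi * |α| * |c|

lemma norm_gg_le (α β : ℝ) (hβ : 0 < β) {c y : ℝ} (hc : |c| ≤ 1 / (12 * β))
    (hy : |y| ≤ |c|) (x : ℝ) :
    ‖gg α β (x + y * Complex.I)‖ ≤ Real.exp (KK α β c) * Real.exp (-(Real.pi / 2) * x ^ 2) := by
  rw [norm_gg, ← Real.exp_add]
  apply Real.exp_le_exp.2
  have hy1 : y ≤ |c| := le_trans (le_abs_self y) hy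
  have hy2 : -|c| ≤ y := le_trans (neg_le_neg hy) (neg_abs_le y)
  have hy3 : y ^ 2 ≤ c ^ 2 := by
    have := sq_le_sq' hy2 hy1
    rwa [_root_.sq_abs] at this
  have hy4 : -y ^ 3 ≤ |c| ^ 3 := by
    have h1 : |y| ^ 3 ≤ |c| ^ 3 := pow_le_pow_left₀ (abs_nonneg y) hy 3
    have h2 : -y ^ 3 ≤ |y| ^ 3 := by
      rw [← _root_.abs_pow]
      exact neg_le_abs _
    linarith
  have hy5 : α * y ≤ |α| * |c| := by
    calc α * y ≤ |α * y| := le_abs_self _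
    _ = |α| * |y| := abs_mul _ _
    _ ≤ |α| * |c| := by gcongr
  have h6 : 6 * β * y * x ^ 2 ≤ (1 / 2) * x ^ 2 := by
    have h61 : 6 * β * y ≤ 1 / 2 := by
      have : β * |c| ≤ β * (1 / (12 * β)) := by gcongr
      rw [mul_one_div] at this
      have hb : β / (12 * β) = 1 / 12 := by field_simp
      nlinarith
    nlinarith [sq_nonneg x]
  have hlin : -x ^ 2 + y ^ 2 + 6 * β * y * x ^ 2 - 2 * β * y ^ 3 + 2 * α * y ≤
      c ^ 2 + 2 * β * |c| ^ 3 + 2 * |α| * |c| - x ^ 2 / 2 := by nlinarith [hβ.le]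
  have hπ := Real.pi_pos
  rw [KK]
  nlinarith [mul_le_mul_of_nonneg_left hlin hπ.le]

lemma diff_gg (α β : ℝ) : Differentiable ℂ (gg α β) := by
  unfold gg
  fun_prop

lemma cont_gg (α β : ℝ) : Continuous (gg α β) := (diff_gg α β).continuous

lemma integrable_gg (α β : ℝ) (hβ : 0 < β) {c : ℝ} (hc : |c| ≤ 1 / (12 * β)) :
    Integrable fun x : ℝ => gg α β (x + c * Complex.I) := by
  refine Integrable.mono' (g := fun x => Real.exp (KK α β c) * Real.exp (-(Real.pi / 2) * x ^ 2))
    ?_ ?_ ?_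
  · exact (integrable_exp_neg_mul_sq (by positivity)).const_mul _
  · exact ((cont_gg α β).comp (by continuity)).aestronglyMeasurable
  · exact Filter.Eventually.of_forall fun x => norm_gg_le α β hβ hc le_rfl x

lemma abs_mem_uIoc {c y : ℝ} (hy : y ∈ Set.uIoc 0 c) : |y| ≤ |c| := by
  rcases le_or_gt 0 c with h | h
  · rw [Set.uIoc_of_le h] at hy
    rw [_root_.abs_of_nonneg h, _root_.abs_of_pos hy.1]
    exact hy.2
  · rw [Set.uIoc_of_ge h.le] at hy
    rw [_root_.abs_of_neg h, _root_.abs_of_nonpos hy.2, neg_le_neg_iff]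
    exact hy.1.le

lemma shift_contour (α β : ℝ) (hβ : 0 < β) {c : ℝ} (hc : |c| ≤ 1 / (12 * β)) :
    ∫ x : ℝ, gg α β (x + c * Complex.I) = ∫ x : ℝ, gg α β x := by
  have hint0 : Integrable fun x : ℝ => gg α β x := by
    have := integrable_gg α β hβ (c := 0) (by simp; positivity)
    simpa using this
  have hintc : Integrable fun x : ℝ => gg α β (x + c * Complex.I) := integrable_gg α β hβ hc
  have hC : ∀ T : ℝ,
      (∫ x : ℝ in -T..T, gg α β x) - (∫ x : ℝ in -T..T, gg α β (x + c * Complex.I)) +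
        Complex.I * (∫ y : ℝ in (0:ℝ)..c, gg α β (T + y * Complex.I)) -
        Complex.I * (∫ y : ℝ in (0:ℝ)..c, gg α β (-T + y * Complex.I)) = 0 := by
    intro T
    have := integral_boundary_rect_eq_zero_of_differentiableOn (gg α β) (-(T:ℂ))
      ((T:ℂ) + c * Complex.I) ((diff_gg α β).differentiableOn)
    simpa only [neg_im, ofReal_im, neg_zero, ofReal_zero, zero_mul, add_zero, neg_re,
      ofReal_re, add_re, mul_re, I_re, mul_zero, I_im, tsub_zero, add_im, mul_im,
      mul_one, zero_add, smul_eq_mul, ofReal_neg] using this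
  -- vertical integrals tend to zero
  have hvert : ∀ (σ : ℝ) (hσ : σ = 1 ∨ σ = -1), Tendsto
      (fun T : ℝ => Complex.I * ∫ y : ℝ in (0:ℝ)..c, gg α β (σ * T + y * Complex.I))
      atTop (nhds 0) := by
    intro σ hσ
    rw [tendsto_zero_iff_norm_tendsto_zero]
    have hb : Tendsto (fun T : ℝ => Real.exp (KK α β c) * Real.exp (-(Real.pi/2) * T ^ 2) * |c|)
        atTop (nhds 0) := by
      have h1 : Tendsto (fun T : ℝ => (Real.pi/2) * T ^ 2) atTop atTop :=
        (tendsto_pow_atTop two_ne_zero).const_mul_atTop (by positivity)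
      have h2 : Tendsto (fun T : ℝ => -(Real.pi/2) * T ^ 2) atTop atBot := by
        simp only [neg_mul]
        exact tendsto_neg_atBot_iff.mpr h1
      have h3 := (Real.tendsto_exp_atBot.comp h2).const_mul (Real.exp (KK α β c))
      have h4 := h3.mul_const |c|
      simpa using h4
    refine tendsto_of_tendsto_of_tendsto_of_le_of_le' tendsto_const_nhds hb
      (Filter.Eventually.of_forall fun T => norm_nonneg _) ?_
    filter_upwards [eventually_ge_atTop (0:ℝ)] with T hT
    rw [norm_mul, Complex.norm_I, one_mul]
    refine (intervalIntegral.norm_integral_le_of_norm_le_const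
      (C := Real.exp (KK α β c) * Real.exp (-(Real.pi/2) * T ^ 2)) ?_).trans ?_
    · -- constant bound
      exact fun y hy => by
        have h := norm_gg_le α β hβ hc (abs_mem_uIoc hy) (σ * T)
        have hx : ((σ * T : ℝ) : ℂ) = σ * T := by push_cast; ring
        rw [hx] at h
        refine h.trans (le_of_eq ?_)
        rcases hσ with h1 | h1 <;> rw [h1] <;> ring_nf
    · rw [sub_zero]
  have hv1 := hvert 1 (Or.inl rfl)
  have hv2 := hvert (-1) (Or.inr rfl)
  simp only [Complex.ofReal_one, Complex.ofReal_neg, one_mul, neg_one_mul] at hv1 hv2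
  have hlim1 : Tendsto (fun T : ℝ => ∫ x : ℝ in -T..T, gg α β (x + c * Complex.I)) atTop
      (nhds (∫ x : ℝ, gg α β (x + c * Complex.I))) :=
    intervalIntegral_tendsto_integral hintc tendsto_neg_atTop_atBot tendsto_id
  have hlim0 : Tendsto (fun T : ℝ => ∫ x : ℝ in -T..T, gg α β x) atTop
      (nhds (∫ x : ℝ, gg α β x)) :=
    intervalIntegral_tendsto_integral hint0 tendsto_neg_atTop_atBot tendsto_id
  have hlim1' : Tendsto (fun T : ℝ => ∫ x : ℝ in -T..T, gg α β (x + c * Complex.I)) atTop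
      (nhds (∫ x : ℝ, gg α β x)) := by
    have : (fun T : ℝ => ∫ x : ℝ in -T..T, gg α β (x + c * Complex.I)) =
        fun T : ℝ => (∫ x : ℝ in -T..T, gg α β x) +
          Complex.I * (∫ y : ℝ in (0:ℝ)..c, gg α β (T + y * Complex.I)) -
          Complex.I * (∫ y : ℝ in (0:ℝ)..c, gg α β (-T + y * Complex.I)) := by
      funext T
      have := hC T
      linear_combination -this
    rw [this]
    simpa using (hlim0.add hv1).sub hv2
  exact tendsto_nhds_unique hlim1 hlim1'

lemma Fab_eq (α β : ℝ) : Fab α β = ∫ x : ℝ, gg α β x := by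
  unfold Fab gg
  congr 1
  funext x
  rw [gauss, Complex.ofReal_exp, ← Complex.exp_add]
  congr 1
  push_cast
  ring

theorem stmt9 :
    ∃ C : ℝ, ∀ α β : ℝ, 0 < β → 1 / β ≤ |α| →
      ‖Fab α β‖ ≤ C * Real.exp (-(Real.pi * |α|) / (12 * β)) := by
  use 2
  intro α β hβ hα
  set s : ℝ := 1 / (12 * β) with hs
  have hs_pos : 0 < s := by positivity
  set c : ℝ := if 0 ≤ α then -s else s with hcdef
  have hcabs : |c| = s := by
    rcases le_or_gt 0 α with h | h
    · rw [hcdef, if_pos h, abs_neg, _root_.abs_of_pos hs_pos]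
    · rw [hcdef, if_neg (not_le.2 h), _root_.abs_of_pos hs_pos]
  have hcle : |c| ≤ 1 / (12 * β) := le_of_eq hcabs
  have h6 : 6 * β * s = 1 / 2 := by rw [hs]; field_simp; ring
  have h12 : 1 / β = 12 * s := by rw [hs]; field_simp
  have hα12 : 12 * s ≤ |α| := h12 ▸ hα
  -- pointwise bound on the shifted line
  have hpt : ∀ x : ℝ, ‖gg α β (x + c * Complex.I)‖ ≤
      Real.exp (-(Real.pi / 2) * x ^ 2) * Real.exp (-(Real.pi * |α|) / (12 * β)) := by
    intro x
    rw [norm_gg, ← Real.exp_add]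
    apply Real.exp_le_exp.2
    have key : -x ^ 2 + c ^ 2 + 6 * β * c * x ^ 2 - 2 * β * c ^ 3 + 2 * α * c ≤
        -(1 / 2) * x ^ 2 - |α| * s := by
      rcases le_or_gt 0 α with h | h
      · have habs : |α| = α := _root_.abs_of_nonneg h
        rw [hcdef, if_pos h, habs]
        have h2b : 2 * β * s ^ 3 = s ^ 2 / 6 := by nlinarith
        nlinarith [sq_nonneg x, mul_le_mul_of_nonneg_right hα12 hs_pos.le, habs ▸ hα12]
      · have habs : |α| = -α := abs_of_neg h
        rw [hcdef, if_neg (not_le.2 h), habs]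
        have h2b : 2 * β * s ^ 3 = s ^ 2 / 6 := by nlinarith
        nlinarith [sq_nonneg x, mul_le_mul_of_nonneg_right hα12 hs_pos.le]
    have hdiv : -(Real.pi * |α|) / (12 * β) = Real.pi * (-(|α| * s)) := by
      rw [hs]; field_simp
    have hπ := Real.pi_pos
    nlinarith [mul_le_mul_of_nonneg_left key hπ.le]
  have hbd_int : Integrable (fun x : ℝ =>
      Real.exp (-(Real.pi / 2) * x ^ 2) * Real.exp (-(Real.pi * |α|) / (12 * β))) :=
    (integrable_exp_neg_mul_sq (by positivity)).mul_const _
  calc ‖Fab α β‖ = ‖∫ x : ℝ, gg α β (x + c * Complex.I)‖ := by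
        rw [Fab_eq, shift_contour α β hβ hcle]
    _ ≤ ∫ x : ℝ, ‖gg α β (x + c * Complex.I)‖ := norm_integral_le_integral_norm _
    _ ≤ ∫ x : ℝ, Real.exp (-(Real.pi / 2) * x ^ 2) * Real.exp (-(Real.pi * |α|) / (12 * β)) :=
        integral_mono (integrable_gg α β hβ hcle).norm hbd_int hpt
    _ = (∫ x : ℝ, Real.exp (-(Real.pi / 2) * x ^ 2)) * Real.exp (-(Real.pi * |α|) / (12 * β)) :=
        integral_mul_const _ _
    _ ≤ 2 * Real.exp (-(Real.pi * |α|) / (12 * β)) := by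
        gcongr
        rw [integral_gaussian]
        have h2 : Real.pi / (Real.pi / 2) = 2 := by
          field_simp
        rw [h2]
        nlinarith [Real.sq_sqrt (by norm_num : (2:ℝ) ≥ 0).le, Real.sqrt_nonneg 2]
end

section
/- Let ε > 0. There is a constant C = C(ε) such that for every square-free positive integer k and every real z ≥ 1, | Σ_{|A| ≤ z} γ_{k²}(−4A³) − 2z ρ(k²)/k² | ≤ C k^{1+ε}, where the sum is over integers A with |A| ≤ z. -/
open scoped BigOperators

/-- `γ_q(n)`: the number of residue classes `β` modulo `q` with `n ≡ 27β² (mod q)`. -/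
noncomputable def gammaCount (q : ℕ) (n : ℤ) : ℕ :=
  Nat.card {β : ZMod q // (n : ZMod q) = 27 * β ^ 2}

/-- `ρ(q)`: the number of pairs of residue classes `(α, β)` modulo `q`
with `4α³ + 27β² ≡ 0 (mod q)`. -/
noncomputable def rhoDisc (q : ℕ) : ℕ :=
  Nat.card {p : ZMod q × ZMod q // 4 * p.1 ^ 3 + 27 * p.2 ^ 2 = 0}

lemma gammaCount_mul {m n : ℕ} (h : Nat.Coprime m n) (a : ℤ) :
    gammaCount (m * n) a = gammaCount m a * gammaCount n a := by
  have e := ZMod.chineseRemainder h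
  unfold gammaCount
  rw [← Nat.card_prod]
  apply Nat.card_congr
  have e1 : {β : ZMod (m*n) // (a : ZMod (m*n)) = 27 * β ^ 2} ≃
      {x : ZMod m × ZMod n // (a : ZMod m) = 27 * x.1 ^ 2 ∧ (a : ZMod n) = 27 * x.2 ^ 2} := by
    refine Equiv.subtypeEquiv e.toEquiv (fun β => ?_)
    constructor
    · intro hb
      have h0 : e ((a : ZMod (m*n))) = e (27 * β ^ 2) := congrArg e hb
      rw [map_mul, map_pow, map_intCast] at h0
      have h27 : e (27 : ZMod (m*n)) = (27 : ZMod m × ZMod n) := by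
        have : ((27 : ℤ) : ZMod (m*n)) = (27 : ZMod (m*n)) := by push_cast; ring
        rw [← this, map_intCast]; push_cast; ring
      rw [h27] at h0
      exact ⟨by simpa using congrArg Prod.fst h0, by simpa using congrArg Prod.snd h0⟩
    · rintro ⟨h1, h2⟩
      apply e.injective
      rw [map_mul, map_pow, map_intCast]
      have h27 : e (27 : ZMod (m*n)) = (27 : ZMod m × ZMod n) := by
        have : ((27 : ℤ) : ZMod (m*n)) = (27 : ZMod (m*n)) := by push_cast; ring
        rw [← this, map_intCast]; push_cast; ring
      rw [h27]
      ext
      · simpa using h1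
      · simpa using h2
  exact e1.trans (Equiv.subtypeProdEquivProd (p := fun b : ZMod m => (a : ZMod m) = 27 * b ^ 2) (q := fun b : ZMod n => (a : ZMod n) = 27 * b ^ 2))

lemma rhoDisc_mul {m n : ℕ} (h : Nat.Coprime m n) :
    rhoDisc (m * n) = rhoDisc m * rhoDisc n := by
  have e := ZMod.chineseRemainder h
  unfold rhoDisc
  rw [← Nat.card_prod]
  apply Nat.card_congr
  have e1 : {p : ZMod (m*n) × ZMod (m*n) // 4 * p.1 ^ 3 + 27 * p.2 ^ 2 = 0} ≃
      {x : (ZMod m × ZMod m) × (ZMod n × ZMod n) //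
        (4 * x.1.1 ^ 3 + 27 * x.1.2 ^ 2 = 0) ∧ (4 * x.2.1 ^ 3 + 27 * x.2.2 ^ 2 = 0)} := by
    refine Equiv.subtypeEquiv
      ((Equiv.prodCongr e.toEquiv e.toEquiv).trans (Equiv.prodProdProdComm _ _ _ _)) (fun p => ?_)
    show _ ↔ (4 * (e p.1).1 ^ 3 + 27 * (e p.2).1 ^ 2 = 0) ∧
      (4 * (e p.1).2 ^ 3 + 27 * (e p.2).2 ^ 2 = 0)
    have key : e (4 * p.1 ^ 3 + 27 * p.2 ^ 2) =
        (4 * (e p.1) ^ 3 + 27 * (e p.2) ^ 2 : ZMod m × ZMod n) := by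
      rw [map_add, map_mul, map_mul, map_pow, map_pow, map_ofNat, map_ofNat]
    constructor
    · intro hp
      have h0 : (4 * (e p.1) ^ 3 + 27 * (e p.2) ^ 2 : ZMod m × ZMod n) = 0 := by
        rw [← key, hp, map_zero]
      rw [Prod.ext_iff] at h0
      constructor
      · simpa using h0.1
      · simpa using h0.2
    · rintro ⟨h1, h2⟩
      apply e.injective
      rw [map_zero, key, Prod.ext_iff]
      constructor
      · simpa using h1
      · simpa using h2
  exact e1.trans (Equiv.subtypeProdEquivProd
    (p := fun x : ZMod m × ZMod m => 4 * x.1 ^ 3 + 27 * x.2 ^ 2 = 0)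
    (q := fun x : ZMod n × ZMod n => 4 * x.1 ^ 3 + 27 * x.2 ^ 2 = 0))

lemma gammaCount_congr_iff {q : ℕ} {x y : ℤ}
    (h : ∀ β : ZMod q, ((x : ℤ) : ZMod q) = 27 * β ^ 2 ↔ ((y : ℤ) : ZMod q) = 27 * β ^ 2) :
    gammaCount q x = gammaCount q y :=
  Nat.card_congr (Equiv.subtypeEquivRight h)

lemma gammaCount_congr_unit {q : ℕ} {x y : ℤ} {c : ZMod q} (hc : IsUnit c)
    (hxy : ((x : ℤ) : ZMod q) * c ^ 2 = ((y : ℤ) : ZMod q)) :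
    gammaCount q x = gammaCount q y := by
  apply Nat.card_congr
  refine Equiv.subtypeEquiv (Units.mulRight hc.unit) (fun β => ?_)
  have hcu : (hc.unit : ZMod q) = c := IsUnit.unit_spec hc
  show _ ↔ (y : ZMod q) = 27 * (β * hc.unit) ^ 2
  rw [hcu, ← hxy]
  have h2 : IsUnit (c ^ 2) := hc.pow 2
  constructor
  · intro hx; rw [hx]; ring
  · intro hy
    have : ((x : ZMod q)) * c ^ 2 = (27 * β ^ 2) * c ^ 2 := by rw [hy]; ring
    exact (h2.mul_left_inj).mp this

lemma gamma_prime_sq_period {p : ℕ} (hp : p.Prime) {a b : ℤ} (hab : (p : ℤ) ∣ (a - b)) :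
    gammaCount (p ^ 2) (-4 * a ^ 3) = gammaCount (p ^ 2) (-4 * b ^ 3) := by
  rcases eq_or_ne p 2 with h2 | hodd
  · subst h2
    apply gammaCount_congr_iff
    intro β
    have hz : ∀ c : ℤ, ((-4 * c ^ 3 : ℤ) : ZMod (2 ^ 2)) = 0 := by
      intro c
      push_cast
      have : ((-4 : ZMod (2 ^ 2))) = 0 := by decide
      rw [this, zero_mul]
    rw [hz a, hz b]
  · have hpodd : ¬ (p : ℤ) ∣ 2 := by
      intro hdvd
      have h2 : p ∣ 2 := by exact_mod_cast hdvd
      exact hodd ((Nat.prime_dvd_prime_iff_eq hp Nat.prime_two).mp h2)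
    have hpI : Prime (p : ℤ) := Nat.prime_iff_prime_int.mp hp
    by_cases hpa : (p : ℤ) ∣ a
    · -- both sides are 0
      have hpb : (p : ℤ) ∣ b := by
        have : b = a - (a - b) := by ring
        rw [this]; exact dvd_sub hpa hab
      apply gammaCount_congr_iff
      intro β
      have hz : ∀ c : ℤ, (p : ℤ) ∣ c → ((-4 * c ^ 3 : ℤ) : ZMod (p ^ 2)) = 0 := by
        intro c hc
        rw [ZMod.intCast_zmod_eq_zero_iff_dvd]
        push_cast
        have h3 : (p : ℤ) ^ 2 ∣ c ^ 3 := (pow_dvd_pow _ (by norm_num)).trans (pow_dvd_pow_of_dvd hc 3)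
        exact Dvd.dvd.mul_left h3 (-4)
      rw [hz a hpa, hz b hpb]
    · -- unit case
      have hpb : ¬ (p : ℤ) ∣ b := by
        intro hdvd
        exact hpa (by have : a = b + (a - b) := by ring
                      rw [this]; exact dvd_add hdvd hab)
      -- work in R
      set R := ZMod (p ^ 2)
      have hpR : ((p : ℤ) : R) ^ 2 = 0 := by
        have : (((p : ℤ) ^ 2 : ℤ) : R) = 0 := by
          rw [ZMod.intCast_zmod_eq_zero_iff_dvd]; push_cast; rfl
        push_cast at this ⊢
        exact_mod_cast this
      have hinv : ∀ x : ℤ, ¬ (p : ℤ) ∣ x → ∃ xi : R, xi * ((x : ℤ) : R) = 1 := by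
        intro x hx
        have hcop : IsCoprime ((p : ℤ) ^ 2) x := ((hpI.coprime_iff_not_dvd).mpr hx).pow_left
        obtain ⟨u, v, huv⟩ := hcop
        refine ⟨((v : ℤ) : R), ?_⟩
        have h1 := congrArg (fun t : ℤ => ((t : ℤ) : R)) huv
        push_cast at h1
        push_cast at hpR
        rw [hpR] at h1
        simpa using h1
      obtain ⟨ai, hai⟩ := hinv a hpa
      obtain ⟨bi, hbi⟩ := hinv b hpb
      obtain ⟨i2, hi2⟩ := hinv 2 hpodd
      obtain ⟨t, ht⟩ : (p : ℤ) ∣ (b - a) := by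
        have : b - a = -(a - b) := by ring
        rw [this]; exact dvd_neg.mpr hab
      set c₀ : R := 1 + ((p : ℤ) : R) * (((t : ℤ) : R) * ai) * i2 with hc₀def
      have hc₀sq : c₀ ^ 2 = 1 + ((p : ℤ) : R) * (((t : ℤ) : R) * ai) := by
        have expand : c₀ ^ 2 = 1 + ((p : ℤ) : R) * (((t : ℤ) : R) * ai) * (i2 * ((2:ℤ) : R))
            + ((p : ℤ) : R) ^ 2 * ((((t : ℤ) : R) * ai) * i2) ^ 2 := by
          rw [hc₀def]; push_cast; ring
        rw [expand, hi2, hpR]; ring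
      have hab2 : ((a : ℤ) : R) * c₀ ^ 2 = ((b : ℤ) : R) := by
        rw [hc₀sq]
        have : ((a : ℤ) : R) * (1 + ((p : ℤ) : R) * (((t : ℤ) : R) * ai))
            = ((a : ℤ) : R) + (((p * t : ℤ) : ℤ) : R) * (ai * ((a : ℤ) : R)) := by push_cast; ring
        rw [this, hai, ← ht]
        push_cast
        ring
      have hc₀unit : IsUnit c₀ := by
        refine IsUnit.of_mul_eq_one (a := c₀) (c₀ * (((a : ℤ) : R) * bi)) ?_
        have : c₀ * (c₀ * (((a : ℤ) : R) * bi)) = (((a : ℤ) : R) * c₀ ^ 2) * bi := by ring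
        rw [this, hab2, mul_comm]
        exact hbi
      refine gammaCount_congr_unit (hc₀unit.pow 3) ?_
      push_cast
      calc (-4 : R) * ((a:ℤ) : R) ^ 3 * (c₀ ^ 3) ^ 2
          = -4 * (((a:ℤ) : R) * c₀ ^ 2) ^ 3 := by ring
        _ = -4 * ((b:ℤ) : R) ^ 3 := by rw [hab2]

lemma rhoDisc_eq_card (q : ℕ) [NeZero q] :
    rhoDisc q = (Finset.univ.filter
      (fun x : ZMod q × ZMod q => 4 * x.1 ^ 3 + 27 * x.2 ^ 2 = 0)).card := by
  rw [rhoDisc, Nat.card_eq_fintype_card, Fintype.card_subtype]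

lemma rhoDisc_four : rhoDisc (2 ^ 2) = 8 := by
  rw [rhoDisc_eq_card]; decide

lemma rhoDisc_nine : rhoDisc (3 ^ 2) = 27 := by
  rw [rhoDisc_eq_card]; decide

lemma card_val_dvd_le (p : ℕ) [NeZero (p ^ 2)] :
    (Finset.univ.filter (fun x : ZMod (p ^ 2) => p ∣ x.val)).card ≤ p := by
  classical
  calc (Finset.univ.filter (fun x : ZMod (p ^ 2) => p ∣ x.val)).card
      ≤ (Finset.univ : Finset (Fin p)).card := by
        apply Finset.card_le_card_of_injOn (fun x => (⟨x.val / p, by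
          have hlt : x.val < p ^ 2 := ZMod.val_lt x
          exact Nat.div_lt_of_lt_mul (by rw [← pow_two]; exact hlt)⟩ : Fin p))
        · intro x hx; exact Finset.mem_univ _
        · intro x hx y hy hxy
          simp only [Finset.coe_filter, Set.mem_setOf_eq, Finset.mem_univ, true_and] at hx hy
          have h1 : x.val / p = y.val / p := by simpa using congrArg Fin.val hxy
          have h2 : x.val = y.val := by
            rw [← Nat.div_mul_cancel hx, ← Nat.div_mul_cancel hy, h1]
          exact ZMod.val_injective _ h2
    _ = p := by simp

section PrimeGE5

variable {p : ℕ} (hp : p.Prime) (hp2 : p ≠ 2) (hp3 : p ≠ 3)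

lemma int_equation {α β : ZMod (p ^ 2)} [NeZero (p ^ 2)]
    (h : 4 * α ^ 3 + 27 * β ^ 2 = 0) :
    ((p : ℤ)) ^ 2 ∣ 4 * (α.val : ℤ) ^ 3 + 27 * (β.val : ℤ) ^ 2 := by
  have hA : ((α.val : ℕ) : ZMod (p ^ 2)) = α := ZMod.natCast_rightInverse α
  have hB : ((β.val : ℕ) : ZMod (p ^ 2)) = β := ZMod.natCast_rightInverse β
  have : ((4 * (α.val : ℤ) ^ 3 + 27 * (β.val : ℤ) ^ 2 : ℤ) : ZMod (p ^ 2)) = 0 := by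
    push_cast
    rw [hA, hB]
    exact h
  rw [ZMod.intCast_zmod_eq_zero_iff_dvd] at this
  exact_mod_cast this

include hp hp2 in
lemma beta_unit [NeZero (p ^ 2)] {α β : ZMod (p ^ 2)}
    (h : 4 * α ^ 3 + 27 * β ^ 2 = 0) (hα : ¬ p ∣ α.val) : ¬ p ∣ β.val := by
  intro hβ
  have hpI : Prime (p : ℤ) := Nat.prime_iff_prime_int.mp hp
  have hint := int_equation h
  have h27 : (p : ℤ) ∣ 27 * (β.val : ℤ) ^ 2 := by
    have : (p : ℤ) ∣ (β.val : ℤ) := Int.natCast_dvd_natCast.mpr hβ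
    exact Dvd.dvd.mul_left (this.pow (by norm_num)) 27
  have h4 : (p : ℤ) ∣ 4 * (α.val : ℤ) ^ 3 := by
    have hp2' : (p : ℤ) ∣ (4 * (α.val : ℤ) ^ 3 + 27 * (β.val : ℤ) ^ 2) :=
      dvd_trans ⟨(p : ℤ), by ring⟩ hint
    exact (dvd_add_left h27).mp hp2'
  rcases hpI.dvd_mul.mp h4 with h | h
  · have : (p : ℤ) ∣ 2 * 2 := by norm_num at h ⊢; exact_mod_cast h
    rcases hpI.dvd_mul.mp this with h' | h' <;>
    · have : p ∣ 2 := by exact_mod_cast h'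
      exact hp2 ((Nat.prime_dvd_prime_iff_eq hp Nat.prime_two).mp this)
  · have : (p : ℤ) ∣ (α.val : ℤ) := hpI.dvd_of_dvd_pow h
    exact hα (by exact_mod_cast this)

include hp hp2 in
lemma sq_eq_cases [NeZero (p ^ 2)] {x y : ZMod (p ^ 2)}
    (h : x ^ 2 = y ^ 2) (hy : ¬ p ∣ y.val) : x = y ∨ x = -y := by
  have hpI : Prime (p : ℤ) := Nat.prime_iff_prime_int.mp hp
  set X := (x.val : ℤ) with hX
  set Y := (y.val : ℤ) with hY
  have hx' : ((X : ℤ) : ZMod (p ^ 2)) = x := by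
    rw [hX]; exact_mod_cast (ZMod.natCast_rightInverse x : _)
  have hy' : ((Y : ℤ) : ZMod (p ^ 2)) = y := by
    rw [hY]; exact_mod_cast (ZMod.natCast_rightInverse y : _)
  have hdvd : (p : ℤ) ^ 2 ∣ (X - Y) * (X + Y) := by
    have : (((X - Y) * (X + Y) : ℤ) : ZMod (p ^ 2)) = 0 := by
      push_cast
      rw [hx', hy']
      ring_nf
      rw [h]  -- may need adjust
      ring
    rw [ZMod.intCast_zmod_eq_zero_iff_dvd] at this
    exact_mod_cast this
  have hpd : (p : ℤ) ∣ (X - Y) * (X + Y) := dvd_trans ⟨(p:ℤ), by ring⟩ hdvd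
  have hnot2 : ¬ ((p : ℤ) ∣ (X - Y) ∧ (p : ℤ) ∣ (X + Y)) := by
    rintro ⟨hm, hpl⟩
    have h2Y : (p : ℤ) ∣ 2 * Y := by
      have : 2 * Y = (X + Y) - (X - Y) := by ring
      rw [this]; exact dvd_sub hpl hm
    rcases hpI.dvd_mul.mp h2Y with h' | h'
    · have : p ∣ 2 := by exact_mod_cast h'
      exact hp2 ((Nat.prime_dvd_prime_iff_eq hp Nat.prime_two).mp this)
    · rw [hY] at h'
      exact hy (by exact_mod_cast h')
  rcases hpI.dvd_mul.mp hpd with hcase | hcase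
  · left
    have hnp : ¬ (p : ℤ) ∣ (X + Y) := fun hc => hnot2 ⟨hcase, hc⟩
    have hcop : IsCoprime ((p : ℤ) ^ 2) (X + Y) :=
      ((hpI.coprime_iff_not_dvd).mpr hnp).pow_left
    have : (p : ℤ) ^ 2 ∣ (X - Y) := hcop.dvd_of_dvd_mul_right hdvd
    have : (((X - Y) : ℤ) : ZMod (p ^ 2)) = 0 := by
      rw [ZMod.intCast_zmod_eq_zero_iff_dvd]; exact_mod_cast this
    push_cast at this
    rw [hx', hy'] at this
    linear_combination this
  · right
    have hnp : ¬ (p : ℤ) ∣ (X - Y) := fun hc => hnot2 ⟨hc, hcase⟩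
    have hcop : IsCoprime ((p : ℤ) ^ 2) (X - Y) :=
      ((hpI.coprime_iff_not_dvd).mpr hnp).pow_left
    have : (p : ℤ) ^ 2 ∣ (X + Y) := hcop.dvd_of_dvd_mul_left hdvd
    have : (((X + Y) : ℤ) : ZMod (p ^ 2)) = 0 := by
      rw [ZMod.intCast_zmod_eq_zero_iff_dvd]; exact_mod_cast this
    push_cast at this
    rw [hx', hy'] at this
    linear_combination this

end PrimeGE5

lemma rhoDisc_prime_sq_le {p : ℕ} (hp : p.Prime) : rhoDisc (p ^ 2) ≤ 3 * p ^ 2 := by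
  haveI : NeZero (p ^ 2) := ⟨pow_ne_zero 2 hp.pos.ne'⟩
  classical
  rcases eq_or_ne p 2 with rfl | hp2
  · rw [rhoDisc_four]; norm_num
  rcases eq_or_ne p 3 with rfl | hp3
  · rw [rhoDisc_nine]; norm_num
  -- p ≥ 5
  have h27u : IsUnit (27 : ZMod (p ^ 2)) := by
    have hcop : Nat.Coprime 27 (p ^ 2) := by
      have h3p : Nat.Coprime 3 p := (Nat.coprime_primes Nat.prime_three hp).mpr
        (fun h => hp3 h.symm)
      have : Nat.Coprime (3 ^ 3) (p ^ 2) := h3p.pow 3 2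
      simpa using this
    have := (ZMod.isUnit_iff_coprime 27 (p ^ 2)).mpr hcop
    simpa using this
  rw [rhoDisc_eq_card]
  have hsum : (Finset.univ.filter
      (fun x : ZMod (p ^ 2) × ZMod (p ^ 2) => 4 * x.1 ^ 3 + 27 * x.2 ^ 2 = 0)).card
      = ∑ α : ZMod (p ^ 2),
        (Finset.univ.filter (fun β : ZMod (p ^ 2) => 4 * α ^ 3 + 27 * β ^ 2 = 0)).card := by
    rw [Finset.card_filter, ← Finset.univ_product_univ, Finset.sum_product]
    refine Finset.sum_congr rfl (fun α _ => ?_)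
    rw [Finset.card_filter]
  rw [hsum]
  -- fiber bounds
  have fiberA : ∀ α : ZMod (p ^ 2), ¬ p ∣ α.val →
      (Finset.univ.filter (fun β : ZMod (p ^ 2) => 4 * α ^ 3 + 27 * β ^ 2 = 0)).card ≤ 2 := by
    intro α hα
    set F := Finset.univ.filter (fun β : ZMod (p ^ 2) => 4 * α ^ 3 + 27 * β ^ 2 = 0) with hF
    rcases F.eq_empty_or_nonempty with he | ⟨β₀, hβ₀⟩
    · rw [he]; simp
    have hβ₀' : 4 * α ^ 3 + 27 * β₀ ^ 2 = 0 := by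
      rw [hF] at hβ₀; exact (Finset.mem_filter.mp hβ₀).2
    have hβ₀u : ¬ p ∣ β₀.val := beta_unit hp hp2 hβ₀' hα
    have hsub : F ⊆ insert β₀ {-β₀} := by
      intro β hβ
      have hβ' : 4 * α ^ 3 + 27 * β ^ 2 = 0 := by
        rw [hF] at hβ; exact (Finset.mem_filter.mp hβ).2
      have h27eq : (27 : ZMod (p ^ 2)) * β ^ 2 = 27 * β₀ ^ 2 := by
        linear_combination hβ' - hβ₀'
      have hsq : β ^ 2 = β₀ ^ 2 := (h27u.mul_right_inj).mp h27eq
      rcases sq_eq_cases hp hp2 hsq hβ₀u with h | h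
      · simp [h]
      · simp [h]
    calc F.card ≤ (insert β₀ ({-β₀} : Finset (ZMod (p ^ 2)))).card := Finset.card_le_card hsub
      _ ≤ 2 := by
        refine (Finset.card_insert_le _ _).trans ?_
        simp
  have fiberB : ∀ α : ZMod (p ^ 2), p ∣ α.val →
      (Finset.univ.filter (fun β : ZMod (p ^ 2) => 4 * α ^ 3 + 27 * β ^ 2 = 0)).card ≤ p := by
    intro α hα
    have hpI : Prime (p : ℤ) := Nat.prime_iff_prime_int.mp hp
    refine le_trans (Finset.card_le_card ?_) (card_val_dvd_le p)
    intro β hβ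
    have hβ' : 4 * α ^ 3 + 27 * β ^ 2 = 0 := (Finset.mem_filter.mp hβ).2
    have hint := int_equation hβ'
    have hA : ((p : ℤ)) ^ 2 ∣ 4 * (α.val : ℤ) ^ 3 := by
      have h3 : ((p : ℤ)) ^ 3 ∣ (α.val : ℤ) ^ 3 :=
        pow_dvd_pow_of_dvd (Int.natCast_dvd_natCast.mpr hα) 3
      exact Dvd.dvd.mul_left ((pow_dvd_pow _ (by norm_num)).trans h3) 4
    have hB : ((p : ℤ)) ^ 2 ∣ 27 * (β.val : ℤ) ^ 2 := by
      have := dvd_sub hint hA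
      simpa using this
    have hcop : IsCoprime ((p : ℤ) ^ 2) 27 := by
      have : ¬ (p : ℤ) ∣ 3 := by
        intro h
        have : p ∣ 3 := by exact_mod_cast h
        exact hp3 ((Nat.prime_dvd_prime_iff_eq hp Nat.prime_three).mp this)
      have h3 : IsCoprime ((p : ℤ)) 3 := (hpI.coprime_iff_not_dvd).mpr this
      have : IsCoprime ((p : ℤ) ^ 2) (3 ^ 3) := IsCoprime.pow h3
      simpa using this
    have hB2 : ((p : ℤ)) ^ 2 ∣ (β.val : ℤ) ^ 2 := hcop.dvd_of_dvd_mul_left hB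
    have hpB : (p : ℤ) ∣ (β.val : ℤ) := by
      refine hpI.dvd_of_dvd_pow (n := 2) ?_
      exact dvd_trans ⟨(p : ℤ), by ring⟩ hB2
    simp only [Finset.mem_filter, Finset.mem_univ, true_and]
    exact_mod_cast hpB
  -- combine
  have hsplit := Finset.sum_filter_add_sum_filter_not Finset.univ
    (fun α : ZMod (p ^ 2) => p ∣ α.val)
    (fun α : ZMod (p ^ 2) =>
      (Finset.univ.filter (fun β : ZMod (p ^ 2) => 4 * α ^ 3 + 27 * β ^ 2 = 0)).card)
  rw [← hsplit]
  have hbound1 : ∑ α ∈ Finset.univ.filter (fun α : ZMod (p ^ 2) => p ∣ α.val),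
      (Finset.univ.filter (fun β : ZMod (p ^ 2) => 4 * α ^ 3 + 27 * β ^ 2 = 0)).card
      ≤ p * p := by
    calc _ ≤ ∑ _α ∈ Finset.univ.filter (fun α : ZMod (p ^ 2) => p ∣ α.val), p :=
          Finset.sum_le_sum (fun α hα => fiberB α (Finset.mem_filter.mp hα).2)
      _ = (Finset.univ.filter (fun α : ZMod (p ^ 2) => p ∣ α.val)).card * p := by
          rw [Finset.sum_const, smul_eq_mul]
      _ ≤ p * p := Nat.mul_le_mul_right p (card_val_dvd_le p)
  have hbound2 : ∑ α ∈ Finset.univ.filter (fun α : ZMod (p ^ 2) => ¬ p ∣ α.val),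
      (Finset.univ.filter (fun β : ZMod (p ^ 2) => 4 * α ^ 3 + 27 * β ^ 2 = 0)).card
      ≤ p ^ 2 * 2 := by
    calc _ ≤ ∑ _α ∈ Finset.univ.filter (fun α : ZMod (p ^ 2) => ¬ p ∣ α.val), 2 :=
          Finset.sum_le_sum (fun α hα => fiberA α (Finset.mem_filter.mp hα).2)
      _ = (Finset.univ.filter (fun α : ZMod (p ^ 2) => ¬ p ∣ α.val)).card * 2 := by
          rw [Finset.sum_const, smul_eq_mul]
      _ ≤ p ^ 2 * 2 := by
          refine Nat.mul_le_mul_right 2 ?_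
          calc (Finset.univ.filter (fun α : ZMod (p ^ 2) => ¬ p ∣ α.val)).card
              ≤ (Finset.univ : Finset (ZMod (p ^ 2))).card := Finset.card_le_card
                (Finset.filter_subset _ _)
            _ = p ^ 2 := by rw [Finset.card_univ, ZMod.card]
  calc _ ≤ p * p + p ^ 2 * 2 := Nat.add_le_add hbound1 hbound2
    _ = 3 * p ^ 2 := by ring


lemma gamma_squarefree_period : ∀ k : ℕ, Squarefree k → ∀ a b : ℤ, (k : ℤ) ∣ a - b →
    gammaCount (k ^ 2) (-4 * a ^ 3) = gammaCount (k ^ 2) (-4 * b ^ 3) := by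
  intro k
  induction k using Nat.strong_induction_on with
  | _ k ih =>
    intro hk a b hab
    rcases eq_or_ne k 0 with rfl | hk0
    · exact absurd hk not_squarefree_zero
    rcases eq_or_ne k 1 with rfl | hk1
    · simp only [one_pow]
      apply Nat.card_congr
      exact Equiv.subtypeEquivRight (fun β =>
        iff_of_true (Subsingleton.elim _ _) (Subsingleton.elim _ _))
    set p := k.minFac with hpdef
    have hp : p.Prime := Nat.minFac_prime hk1
    set m := k / p with hmdef
    have hkeq : k = p * m := (Nat.div_mul_cancel (Nat.minFac_dvd k)).symm.trans (mul_comm m p)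
    have hm0 : m ≠ 0 := by
      intro h; rw [h, mul_zero] at hkeq; exact hk0 hkeq
    have hmlt : m < k := by
      rw [hmdef]
      exact Nat.div_lt_self (Nat.pos_of_ne_zero hk0) hp.one_lt
    have hpm : ¬ p ∣ m := by
      intro h
      obtain ⟨m', hm'⟩ := h
      have : p * p ∣ k := ⟨m', by rw [hkeq, hm']; ring⟩
      exact Nat.Prime.one_lt hp |>.ne' (Nat.isUnit_iff.mp (hk p this))
    have hcop : Nat.Coprime p m := (Nat.Prime.coprime_iff_not_dvd hp).mpr hpm
    have hcop2 : Nat.Coprime (p ^ 2) (m ^ 2) := hcop.pow 2 2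
    have hmsq : Squarefree m := hk.squarefree_of_dvd ⟨p, by rw [hkeq]; ring⟩
    rw [hkeq, mul_pow, gammaCount_mul hcop2, gammaCount_mul hcop2]
    have hpdvd : (p : ℤ) ∣ a - b :=
      (Int.natCast_dvd_natCast.mpr ⟨m, hkeq⟩).trans hab
    have hmdvd : (m : ℤ) ∣ a - b :=
      (Int.natCast_dvd_natCast.mpr ⟨p, by rw [hkeq]; ring⟩).trans hab
    rw [gamma_prime_sq_period hp hpdvd, ih m hmlt hmsq a b hmdvd]

lemma rhoDisc_squarefree_le : ∀ k : ℕ, Squarefree k →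
    rhoDisc (k ^ 2) ≤ 3 ^ k.primeFactors.card * k ^ 2 := by
  intro k
  induction k using Nat.strong_induction_on with
  | _ k ih =>
    intro hk
    rcases eq_or_ne k 0 with rfl | hk0
    · exact absurd hk not_squarefree_zero
    rcases eq_or_ne k 1 with rfl | hk1
    · rw [rhoDisc_eq_card]
      simp only [Nat.primeFactors_one, Finset.card_empty, pow_zero, one_pow, mul_one]
      calc (Finset.univ.filter _).card ≤ (Finset.univ : Finset (ZMod (1^2) × ZMod (1^2))).card :=
            Finset.card_le_card (Finset.filter_subset _ _)
        _ = 1 := by simp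
    set p := k.minFac with hpdef
    have hp : p.Prime := Nat.minFac_prime hk1
    set m := k / p with hmdef
    have hkeq : k = p * m := (Nat.div_mul_cancel (Nat.minFac_dvd k)).symm.trans (mul_comm m p)
    have hm0 : m ≠ 0 := by
      intro h; rw [h, mul_zero] at hkeq; exact hk0 hkeq
    have hmlt : m < k := by
      rw [hmdef]
      exact Nat.div_lt_self (Nat.pos_of_ne_zero hk0) hp.one_lt
    have hpm : ¬ p ∣ m := by
      intro h
      obtain ⟨m', hm'⟩ := h
      have : p * p ∣ k := ⟨m', by rw [hkeq, hm']; ring⟩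
      exact Nat.Prime.one_lt hp |>.ne' (Nat.isUnit_iff.mp (hk p this))
    have hcop : Nat.Coprime p m := (Nat.Prime.coprime_iff_not_dvd hp).mpr hpm
    have hcop2 : Nat.Coprime (p ^ 2) (m ^ 2) := hcop.pow 2 2
    have hmsq : Squarefree m := hk.squarefree_of_dvd ⟨p, by rw [hkeq]; ring⟩
    have hcard : (p * m).primeFactors.card = m.primeFactors.card + 1 := by
      rw [Nat.primeFactors_mul hp.pos.ne' hm0, hp.primeFactors]
      rw [Finset.union_comm, Finset.card_union_of_disjoint (by
        simp only [Finset.disjoint_singleton_right]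
        intro hmem
        exact hpm (Nat.dvd_of_mem_primeFactors hmem))]
      simp
    rw [hkeq, mul_pow, rhoDisc_mul hcop2, hcard]
    calc rhoDisc (p ^ 2) * rhoDisc (m ^ 2) ≤ (3 * p ^ 2) * (3 ^ m.primeFactors.card * m ^ 2) :=
          Nat.mul_le_mul (rhoDisc_prime_sq_le hp) (ih m hmlt hmsq)
      _ = 3 ^ (m.primeFactors.card + 1) * (p ^ 2 * m ^ 2) := by ring

-- ## new material

lemma gammaCount_eq_card (q : ℕ) [NeZero q] (n : ℤ) :
    gammaCount q n = (Finset.univ.filter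
      (fun β : ZMod q => (n : ZMod q) = 27 * β ^ 2)).card := by
  rw [gammaCount, Nat.card_eq_fintype_card, Fintype.card_subtype]

lemma rho_eq_sum (q : ℕ) [NeZero q] :
    rhoDisc q = ∑ α : ZMod q, gammaCount q (-4 * ((α.val : ℤ)) ^ 3) := by
  classical
  rw [rhoDisc_eq_card]
  rw [Finset.card_filter, ← Finset.univ_product_univ, Finset.sum_product]
  refine Finset.sum_congr rfl (fun α _ => ?_)
  rw [← Finset.card_filter, gammaCount_eq_card]
  apply Finset.card_nbij id
  · intro β hβ
    simp only [Finset.mem_coe, Finset.mem_filter, Finset.mem_univ, true_and] at hβ ⊢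
    have hval : ((α.val : ℕ) : ZMod q) = α := ZMod.natCast_rightInverse α
    push_cast
    rw [hval]
    simp only [id]
    linear_combination -hβ
  · intro β₁ h₁ β₂ h₂ h; simpa using h
  · intro β hβ
    refine ⟨β, ?_, rfl⟩
    simp only [Finset.coe_filter, Set.mem_setOf_eq, Finset.mem_univ, true_and] at hβ ⊢
    have hval : ((α.val : ℕ) : ZMod q) = α := ZMod.natCast_rightInverse α
    push_cast at hβ
    rw [hval] at hβ
    linear_combination -hβ

lemma sum_Ico_int_of_periodic (n : ℕ) [NeZero n] (f : ℤ → ℕ)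
    (hf : ∀ a b : ℤ, (n : ℤ) ∣ a - b → f a = f b) (m : ℤ) :
    ∑ a ∈ Finset.Ico m (m + n), f a = ∑ x : ZMod n, f (x.val : ℤ) := by
  have hval : ∀ x : ZMod n, ((x.val : ℕ) : ZMod n) = x := fun x => ZMod.natCast_rightInverse x
  have hmod : ∀ a : ℤ, (n : ℤ) ∣ a - ((a : ZMod n).val : ℤ) := by
    intro a
    have h0 : ((a - ((a : ZMod n).val : ℤ) : ℤ) : ZMod n) = 0 := by
      rw [Int.cast_sub, Int.cast_natCast, hval, sub_self]
    exact_mod_cast (ZMod.intCast_zmod_eq_zero_iff_dvd _ n).mp h0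
  refine Finset.sum_nbij' (fun a => (a : ZMod n))
    (fun x => m + (((x - (m : ZMod n)).val : ℕ) : ℤ)) ?_ ?_ ?_ ?_ ?_
  · intro a ha; exact Finset.mem_univ _
  · intro x hx
    rw [Finset.mem_Ico]
    constructor
    · exact le_add_of_nonneg_right (Int.natCast_nonneg _)
    · have : ((x - (m : ZMod n)).val : ℤ) < (n : ℤ) := by exact_mod_cast ZMod.val_lt _
      omega
  · intro a ha
    rw [Finset.mem_Ico] at ha
    have hc : ((a - m : ℤ) : ZMod n) = (a : ZMod n) - (m : ZMod n) := by push_cast; ring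
    have h0 : ((a - m).toNat : ℤ) = a - m := Int.toNat_of_nonneg (by omega)
    have h1 : (a : ZMod n) - (m : ZMod n) = (((a - m).toNat : ℕ) : ZMod n) := by
      have hcast : ((((a - m).toNat : ℕ) : ℤ) : ZMod n) = (((a - m).toNat : ℕ) : ZMod n) :=
        Int.cast_natCast _
      rw [← hcast, h0]
      push_cast
      ring
    have h2 : (a - m).toNat < n := by omega
    rw [h1, ZMod.val_natCast_of_lt h2]
    omega
  · intro x hx
    push_cast
    rw [hval]
    ring
  · intro a ha
    refine hf a (((a : ZMod n)).val : ℤ) (hmod a)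

lemma sum_Ico_int_blocks (n : ℕ) [NeZero n] (f : ℤ → ℕ)
    (hf : ∀ a b : ℤ, (n : ℤ) ∣ a - b → f a = f b) (m : ℤ) (j : ℕ) :
    ∑ a ∈ Finset.Ico m (m + j * n), f a = j * ∑ x : ZMod n, f (x.val : ℤ) := by
  induction j with
  | zero => simp
  | succ j ihj =>
    have h1 : m ≤ m + (j : ℤ) * n := by
      have : (0 : ℤ) ≤ (j : ℤ) * n := by positivity
      omega
    have h2 : m + (j : ℤ) * n ≤ m + ((j : ℕ) + 1 : ℕ) * n := by push_cast; nlinarith [Nat.pos_of_ne_zero (NeZero.ne n)]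
    have hsplit : Finset.Ico m (m + ((j + 1 : ℕ) : ℤ) * n)
        = Finset.Ico m (m + (j : ℤ) * n) ∪ Finset.Ico (m + (j : ℤ) * n) (m + ((j + 1 : ℕ) : ℤ) * n) := by
      rw [Finset.Ico_union_Ico_eq_Ico h1 (by push_cast; nlinarith [Nat.pos_of_ne_zero (NeZero.ne n)])]
    push_cast
    push_cast at hsplit ihj
    rw [hsplit, Finset.sum_union (Finset.Ico_disjoint_Ico_consecutive _ _ _), ihj]
    have : m + ((j : ℤ) + 1) * n = (m + (j : ℤ) * n) + n := by ring
    rw [this, sum_Ico_int_of_periodic n f hf]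
    ring


lemma three_pow_card_le (ε : ℝ) (hε : 0 < ε) :
    ∃ C : ℝ, 1 ≤ C ∧ ∀ k : ℕ, Squarefree k →
      ((3 : ℝ) ^ k.primeFactors.card) ≤ C * (k : ℝ) ^ ε := by
  classical
  set B : ℕ := ⌈(3 : ℝ) ^ (1 / ε)⌉₊ with hBdef
  refine ⟨3 ^ (B + 1), one_le_pow₀ (by norm_num), ?_⟩
  intro k hk
  have hk0 : k ≠ 0 := hk.ne_zero
  set S := k.primeFactors with hS
  have hcards : (S.filter (fun p => p ≤ B)).card + (S.filter (fun p => ¬ p ≤ B)).card = S.card :=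
    Finset.card_filter_add_card_filter_not _
  have hsmall : (S.filter (fun p => p ≤ B)).card ≤ B + 1 := by
    calc (S.filter (fun p => p ≤ B)).card ≤ (Finset.range (B + 1)).card := by
          apply Finset.card_le_card
          intro p hp
          rw [Finset.mem_range]
          have := (Finset.mem_filter.mp hp).2
          omega
      _ = B + 1 := Finset.card_range _
  have hbig : (3 : ℝ) ^ (S.filter (fun p => ¬ p ≤ B)).card ≤ (k : ℝ) ^ ε := by
    have h3eq : ((3 : ℝ) ^ (1 / ε)) ^ ε = 3 := by
      rw [← Real.rpow_mul (by norm_num), one_div_mul_cancel hε.ne', Real.rpow_one]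
    calc (3 : ℝ) ^ (S.filter (fun p => ¬ p ≤ B)).card
        = ∏ _p ∈ S.filter (fun p => ¬ p ≤ B), (3 : ℝ) := by
          rw [Finset.prod_const]
      _ ≤ ∏ p ∈ S.filter (fun p => ¬ p ≤ B), (p : ℝ) ^ ε := by
          apply Finset.prod_le_prod (fun _ _ => by norm_num)
          intro p hp
          have hpB : B < p := by
            have := (Finset.mem_filter.mp hp).2
            omega
          have h1 : (3 : ℝ) ^ (1 / ε) ≤ (B : ℝ) := Nat.le_ceil _
          have h2 : (B : ℝ) ≤ (p : ℝ) := by exact_mod_cast hpB.le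
          calc (3 : ℝ) = ((3 : ℝ) ^ (1 / ε)) ^ ε := h3eq.symm
            _ ≤ (p : ℝ) ^ ε := Real.rpow_le_rpow (Real.rpow_nonneg (by norm_num) _)
                (h1.trans h2) hε.le
      _ = (∏ p ∈ S.filter (fun p => ¬ p ≤ B), (p : ℝ)) ^ ε :=
          Real.finset_prod_rpow _ _ (fun i _ => by positivity) ε
      _ ≤ (k : ℝ) ^ ε := by
          apply Real.rpow_le_rpow (Finset.prod_nonneg (fun i _ => by positivity)) _ hε.le
          have hdvd : (∏ p ∈ S.filter (fun p => ¬ p ≤ B), p) ∣ ∏ p ∈ S, p :=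
            Finset.prod_dvd_prod_of_subset _ _ _ (Finset.filter_subset _ _)
          have hprodk : ∏ p ∈ S, p = k := Nat.prod_primeFactors_of_squarefree hk
          have : (∏ p ∈ S.filter (fun p => ¬ p ≤ B), p) ≤ k := by
            rw [← hprodk]
            exact Nat.le_of_dvd (by
              rw [hprodk]
              exact Nat.pos_of_ne_zero hk0) hdvd
          calc (∏ p ∈ S.filter (fun p => ¬ p ≤ B), (p : ℝ))
              = ((∏ p ∈ S.filter (fun p => ¬ p ≤ B), p : ℕ) : ℝ) := by push_cast; rfl
            _ ≤ (k : ℝ) := by exact_mod_cast this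
  calc (3 : ℝ) ^ S.card = (3 : ℝ) ^ ((S.filter (fun p => p ≤ B)).card
        + (S.filter (fun p => ¬ p ≤ B)).card) := by rw [hcards]
    _ = (3 : ℝ) ^ (S.filter (fun p => p ≤ B)).card
        * (3 : ℝ) ^ (S.filter (fun p => ¬ p ≤ B)).card := by rw [pow_add]
    _ ≤ (3 : ℝ) ^ (B + 1) * (k : ℝ) ^ ε := by
        apply mul_le_mul _ hbig (by positivity) (by positivity)
        exact pow_le_pow_right₀ (by norm_num) hsmall

open scoped BigOperators

set_option maxHeartbeats 1000000 in
theorem stmt18 (ε : ℝ) (hε : 0 < ε) :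
    ∃ C : ℝ, ∀ k : ℕ, 0 < k → Squarefree k → ∀ z : ℝ, 1 ≤ z →
      |(∑ A ∈ Finset.Icc (-⌊z⌋) ⌊z⌋, (gammaCount (k ^ 2) (-4 * A ^ 3) : ℝ))
          - 2 * z * (rhoDisc (k ^ 2) : ℝ) / ((k : ℝ) ^ 2)| ≤
        C * (k : ℝ) ^ ((1 : ℝ) + ε) := by
  obtain ⟨C₀, hC₀1, hC₀⟩ := three_pow_card_le ε hε
  refine ⟨2 * C₀, ?_⟩
  intro k hk hsqf z hz
  haveI : NeZero k := ⟨hk.ne'⟩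
  haveI : NeZero (k ^ 2) := ⟨pow_ne_zero 2 hk.ne'⟩
  set g : ℤ → ℕ := fun a => gammaCount (k ^ 2) (-4 * a ^ 3) with hg
  have hper : ∀ a b : ℤ, (k : ℤ) ∣ a - b → g a = g b :=
    fun a b h => gamma_squarefree_period k hsqf a b h
  have hperq : ∀ a b : ℤ, ((k ^ 2 : ℕ) : ℤ) ∣ a - b → g a = g b := by
    intro a b h
    exact hper a b (dvd_trans ⟨(k : ℤ), by push_cast; ring⟩ h)
  set T : ℕ := ∑ x : ZMod k, g ((x.val : ℤ)) with hT
  -- ρ(k²) = k * T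
  have hrho : rhoDisc (k ^ 2) = k * T := by
    have h1 : rhoDisc (k ^ 2) = ∑ x : ZMod (k ^ 2), g ((x.val : ℤ)) := rho_eq_sum (k ^ 2)
    have h2 : ∑ a ∈ Finset.Ico (0 : ℤ) (0 + (k ^ 2 : ℕ)), g a
        = ∑ x : ZMod (k ^ 2), g ((x.val : ℤ)) := sum_Ico_int_of_periodic (k ^ 2) g hperq 0
    have h3 : ∑ a ∈ Finset.Ico (0 : ℤ) (0 + (k : ℕ) * (k : ℕ)), g a = k * T :=
      sum_Ico_int_blocks k g hper 0 k
    rw [h1, ← h2, ← h3]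
    congr 2
    push_cast
    ring
  -- T ≤ 3^ω(k) * k
  have hTle : T ≤ 3 ^ k.primeFactors.card * k := by
    have hb := rhoDisc_squarefree_le k hsqf
    rw [hrho] at hb
    have heq : 3 ^ k.primeFactors.card * k ^ 2 = k * (3 ^ k.primeFactors.card * k) := by ring
    rw [heq] at hb
    exact Nat.le_of_mul_le_mul_left hb hk
  -- interval decomposition
  set N : ℤ := ⌊z⌋ with hN
  have hN1 : (1 : ℤ) ≤ N := by
    rw [hN]
    exact_mod_cast Int.le_floor.mpr (by exact_mod_cast hz)
  set L : ℤ := 2 * N + 1 with hL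
  have hL0 : 0 < L := by omega
  set j : ℕ := (L / k).toNat with hj
  set r : ℤ := L % k with hr
  have hkz : (0 : ℤ) < (k : ℤ) := by exact_mod_cast hk
  have hr0 : 0 ≤ r := Int.emod_nonneg L hkz.ne'
  have hrk : r < k := Int.emod_lt_of_pos L hkz
  have hjnn : 0 ≤ L / (k : ℤ) := Int.ediv_nonneg hL0.le hkz.le
  have hjL : ((j : ℤ)) = L / k := Int.toNat_of_nonneg hjnn
  have hLdecomp : L = (j : ℤ) * (k : ℤ) + r := by
    rw [hjL, hr, mul_comm]
    exact (Int.mul_ediv_add_emod L k).symm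
  -- sum over the interval
  have hIcc : Finset.Icc (-N) N = Finset.Ico (-N) (-N + L) := by
    ext x
    simp only [Finset.mem_Icc, Finset.mem_Ico]
    omega
  have hsplitsum : ∑ a ∈ Finset.Ico (-N) (-N + L), g a
      = ∑ a ∈ Finset.Ico (-N) (-N + (j : ℤ) * (k : ℤ)), g a
      + ∑ a ∈ Finset.Ico (-N + (j : ℤ) * (k : ℤ)) (-N + L), g a := by
    have h1 : -N ≤ -N + (j : ℤ) * (k : ℤ) := by
      have : (0 : ℤ) ≤ (j : ℤ) * (k : ℤ) := by positivity
      omega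
    have h2 : -N + (j : ℤ) * (k : ℤ) ≤ -N + L := by omega
    rw [← Finset.sum_union (Finset.Ico_disjoint_Ico_consecutive _ _ _),
      Finset.Ico_union_Ico_eq_Ico h1 h2]
  have hblock : ∑ a ∈ Finset.Ico (-N) (-N + (j : ℤ) * (k : ℤ)), g a = j * T := by
    have := sum_Ico_int_blocks k g hper (-N) j
    rw [← this]
  set R : ℕ := ∑ a ∈ Finset.Ico (-N + (j : ℤ) * (k : ℤ)) (-N + L), g a with hR
  have hRT : R ≤ T := by
    calc R ≤ ∑ a ∈ Finset.Ico (-N + (j : ℤ) * (k : ℤ)) (-N + (j : ℤ) * (k : ℤ) + (k : ℤ)), g a := by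
          apply Finset.sum_le_sum_of_subset
          apply Finset.Ico_subset_Ico_right
          omega
      _ = T := by
          have := sum_Ico_int_of_periodic k g hper (-N + (j : ℤ) * (k : ℤ))
          rw [this]
  have htotal : ∑ a ∈ Finset.Icc (-N) N, g a = j * T + R := by
    rw [hIcc, hsplitsum, hblock]
  -- now real estimates
  have hsumcast : (∑ A ∈ Finset.Icc (-N) N, (gammaCount (k ^ 2) (-4 * A ^ 3) : ℝ))
      = ((j * T + R : ℕ) : ℝ) := by
    rw [← htotal, Nat.cast_sum]
  rw [hsumcast, hrho]
  have hkR : (1 : ℝ) ≤ (k : ℝ) := by exact_mod_cast hk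
  have hkR0 : (0 : ℝ) < (k : ℝ) := by linarith
  have hT0 : (0 : ℝ) ≤ (T : ℝ) := by positivity
  set u : ℝ := (T : ℝ) / (k : ℝ) with hu
  have hu0 : 0 ≤ u := by positivity
  have huk : u * (k : ℝ) = (T : ℝ) := by
    rw [hu]; field_simp
  have hmain : 2 * z * ((k * T : ℕ) : ℝ) / ((k : ℝ) ^ 2) = 2 * z * u := by
    rw [hu]
    push_cast
    field_simp
  rw [hmain]
  have hScast : ((j * T + R : ℕ) : ℝ) = (j : ℝ) * (T : ℝ) + (R : ℝ) := by push_cast; ring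
  rw [hScast]
  -- bounds
  have hzN : ((N : ℝ)) ≤ z := Int.floor_le z
  have hzN2 : z < ((N : ℝ)) + 1 := Int.lt_floor_add_one z
  have hLNr : ((L : ℤ) : ℝ) = 2 * ((N : ℤ) : ℝ) + 1 := by
    rw [hL]; push_cast; ring
  have hLz1 : ((L : ℤ) : ℝ) - 2 * z ≤ 1 := by rw [hLNr]; linarith
  have hLz2 : -1 ≤ ((L : ℤ) : ℝ) - 2 * z := by rw [hLNr]; linarith
  have hjkr : (j : ℝ) * (k : ℝ) = ((L : ℤ) : ℝ) - ((r : ℤ) : ℝ) := by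
    have hLd : ((L : ℤ) : ℝ) = (j : ℝ) * (k : ℝ) + ((r : ℤ) : ℝ) := by
      rw [hLdecomp]; push_cast; ring
    linarith
  have hrR0 : (0 : ℝ) ≤ ((r : ℤ) : ℝ) := by exact_mod_cast hr0
  have hrRk : ((r : ℤ) : ℝ) ≤ (k : ℝ) := by exact_mod_cast hrk.le
  have hRT' : ((R : ℕ) : ℝ) ≤ (T : ℝ) := by exact_mod_cast hRT
  have hR0 : (0 : ℝ) ≤ ((R : ℕ) : ℝ) := by positivity
  have hjT : (j : ℝ) * (T : ℝ) = ((((L : ℤ) : ℝ) - ((r : ℤ) : ℝ))) * u := by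
    rw [← hjkr, ← huk]; ring
  have hkey : |(j : ℝ) * (T : ℝ) + (R : ℝ) - 2 * z * u| ≤ 2 * (T : ℝ) := by
    rw [abs_le]
    constructor
    · rw [hjT]
      linarith [mul_le_mul_of_nonneg_right hLz2 hu0, mul_le_mul_of_nonneg_right hrRk hu0,
        mul_le_mul_of_nonneg_right hkR hu0, hR0, huk]
    · rw [hjT]
      linarith [mul_le_mul_of_nonneg_right hLz1 hu0, mul_nonneg hrR0 hu0,
        mul_le_mul_of_nonneg_right hkR hu0, hRT', huk]
  refine hkey.trans ?_
  have h3T : (T : ℝ) ≤ (3 : ℝ) ^ k.primeFactors.card * (k : ℝ) := by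
    calc (T : ℝ) ≤ ((3 ^ k.primeFactors.card * k : ℕ) : ℝ) := by exact_mod_cast hTle
      _ = (3 : ℝ) ^ k.primeFactors.card * (k : ℝ) := by push_cast; ring
  have hpow : (k : ℝ) ^ ((1 : ℝ) + ε) = (k : ℝ) * (k : ℝ) ^ ε := by
    rw [Real.rpow_add hkR0, Real.rpow_one]
  rw [hpow]
  have h3k : (3 : ℝ) ^ k.primeFactors.card ≤ C₀ * (k : ℝ) ^ ε := hC₀ k hsqf
  have hkeps : (0 : ℝ) ≤ (k : ℝ) ^ ε := Real.rpow_nonneg hkR0.le _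
  linarith [mul_le_mul_of_nonneg_right h3k hkR0.le]
end
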